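/- arXiv:2505.14018 — 3 statements merged into one kernel-verified Lean document; each statement's English description precedes it below -/
import Mathlib

section
/- Let G be a 2-connected graph that is k-contractible to a cactus T, and fix a T-witness structure W of G. If f: V(G) → {1,2,3} is obtained by assigning each vertex a color independently and uniformly at random, then f is compatible with W with probability at least 1/3^{6k}. -/
open SimpleGraph

universe u v

/-- A cactus: a connected graph in which every edge lies on at most one cycle
(any two cycles through a common edge have the same edge set). -/
def IsCactus {V : Type u} (G : SimpleGraph V) : Prop :=
  G.Connected ∧ ∀ (e : Sym2 V) (a b : V) (c₁ : G.Walk a a) (c₂ : G.Walk b b),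
    c₁.IsCycle → c₂.IsCycle → e ∈ c₁.edges → e ∈ c₂.edges →
    {e' | e' ∈ c₁.edges} = {e' | e' ∈ c₂.edges}

/-- The graph `G/F` obtained by contracting the edges of `F`: its vertices are the
connected components of the subgraph spanned by the edges of `F` that lie in `G`. -/
def contract {V : Type u} (G : SimpleGraph V) (F : Set (Sym2 V)) :
    SimpleGraph (SimpleGraph.fromEdgeSet F ⊓ G).ConnectedComponent where
  Adj a b := a ≠ b ∧ ∃ x y : V, G.Adj x y ∧
      (SimpleGraph.fromEdgeSet F ⊓ G).connectedComponentMk x = a ∧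
      (SimpleGraph.fromEdgeSet F ⊓ G).connectedComponentMk y = b
  symm := by
    constructor
    rintro a b ⟨hne, x, y, hadj, hx, hy⟩
    exact ⟨hne.symm, y, x, hadj.symm, hy, hx⟩
  loopless := by
    constructor
    rintro a ⟨hne, -⟩
    exact hne rfl

/-- A cut-vertex of `G`: removing it disconnects the graph. -/
def IsCutVertex {V : Type u} (G : SimpleGraph V) (x : V) : Prop :=
  ¬ (G.induce ({x}ᶜ : Set V)).Connected

/-- 2-connected: connected, at least 3 vertices, no cut-vertex. -/
def TwoConnected {V : Type u} (G : SimpleGraph V) : Prop :=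
  G.Connected ∧ 3 ≤ Nat.card V ∧ ∀ x : V, (G.induce ({x}ᶜ : Set V)).Connected

/-- A cable path: a path whose internal vertices are adjacent exactly to their
two neighbours on the path. -/
def IsCablePath {V : Type u} (G : SimpleGraph V) (l : List V) : Prop :=
  l ≠ [] ∧ l.Nodup ∧ l.Chain' G.Adj ∧
  ∀ (i : ℕ) (h2 : i + 1 < l.length) (_h1 : 1 ≤ i) (y : V),
    G.Adj (l.get ⟨i, by omega⟩) y ↔
      (y = l.get ⟨i - 1, by omega⟩ ∨ y = l.get ⟨i + 1, h2⟩)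

/-- `G` is contractible to `H` via `ψ`: preimages are connected witness sets and
`H`-adjacency corresponds to existence of crossing edges of `G`. -/
def IsContraction {V : Type u} {W : Type v} (G : SimpleGraph V) (H : SimpleGraph W)
    (ψ : V → W) : Prop :=
  Function.Surjective ψ ∧
  (∀ t : W, (G.induce (ψ ⁻¹' {t})).Connected) ∧
  (∀ t t' : W, H.Adj t t' ↔ t ≠ t' ∧ ∃ x y : V, G.Adj x y ∧ ψ x = t ∧ ψ y = t')

/-- The witness set of `t` is big: it contains at least two vertices. -/
def BigWitness {V : Type u} {W : Type v} (ψ : V → W) (t : W) : Prop :=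
  ∃ a b : V, a ≠ b ∧ ψ a = t ∧ ψ b = t

/-- A 3-colouring `f` of `V(G)` is compatible with the `T`-witness structure given by `ψ`:
witness sets are monochromatic, adjacent big witness sets get distinct colours, and
endpoints of cable paths in `T` between two big witness sets through singleton witness
sets are coloured differently from their path-neighbours. -/
def Compatible {V : Type u} {W : Type v} (T : SimpleGraph W) (ψ : V → W)
    (f : V → Fin 3) : Prop :=
  (∀ x y : V, ψ x = ψ y → f x = f y) ∧
  (∀ t t' : W, BigWitness ψ t → BigWitness ψ t' → T.Adj t t' →
    ∀ x y : V, ψ x = t → ψ y = t' → f x ≠ f y) ∧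
  (∀ l : List W, IsCablePath T l → ∀ (hlen : 3 ≤ l.length),
    BigWitness ψ (l.get ⟨0, by omega⟩) →
    BigWitness ψ (l.get ⟨l.length - 1, by omega⟩) →
    (∀ (i : ℕ) (h : i < l.length), 1 ≤ i → i < l.length - 1 →
      ¬ BigWitness ψ (l.get ⟨i, h⟩)) →
    ((∀ x y : V, ψ x = l.get ⟨0, by omega⟩ → ψ y = l.get ⟨1, by omega⟩ → f x ≠ f y) ∧
     (∀ x y : V, ψ x = l.get ⟨l.length - 1, by omega⟩ →
        ψ y = l.get ⟨l.length - 2, by omega⟩ → f x ≠ f y)))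

/-- The graph `G - Z`, seen as a graph on all of `V`: edges of `G` avoiding `Z`. -/
def restrictOutside {V : Type u} (G : SimpleGraph V) (Z : Set V) : SimpleGraph V where
  Adj x y := G.Adj x y ∧ x ∉ Z ∧ y ∉ Z
  symm := by constructor; rintro x y ⟨h, hx, hy⟩; exact ⟨h.symm, hy, hx⟩
  loopless := by constructor; rintro x ⟨h, -, -⟩; exact G.irrefl h

/-- `Z` is a core of `G`: every connected component of `G - Z` is an isolated vertex
or (the vertex set of) a cable path of `G`. -/
def IsCore {V : Type u} (G : SimpleGraph V) (Z : Set V) : Prop :=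
  ∀ x ∉ Z, {u | (restrictOutside G Z).Reachable x u} = {x} ∨
    ∃ l : List V, IsCablePath G l ∧
      {u | (restrictOutside G Z).Reachable x u} = {u | u ∈ l}

/-- A connected core. -/
def IsConnectedCore {V : Type u} (G : SimpleGraph V) (Z : Set V) : Prop :=
  (G.induce Z).Connected ∧ IsCore G Z

/-- `B` induces a nonempty connected subgraph without cut-vertices. -/
def NoCutVertexSet {V : Type u} (G : SimpleGraph V) (B : Set V) : Prop :=
  B.Nonempty ∧ (G.induce B).Connected ∧
  ∀ x ∈ B, (B \ {x}).Nonempty → (G.induce (B \ {x})).Connected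

/-- A block of `G`: a maximal set inducing a connected subgraph without cut-vertices. -/
def IsBlock {V : Type u} (G : SimpleGraph V) (B : Set V) : Prop :=
  NoCutVertexSet G B ∧ ∀ B' : Set V, B ⊆ B' → NoCutVertexSet G B' → B = B'

/-- `B` is the vertex set of an induced cycle of `G`. -/
def IsCycleSet {V : Type u} (G : SimpleGraph V) (B : Set V) : Prop :=
  ∃ (a : V) (c : G.Walk a a), c.IsCycle ∧ {x | x ∈ c.support} = B ∧
    ∀ x ∈ B, ∀ y ∈ B, G.Adj x y → s(x, y) ∈ c.edges

/-- `G` can be turned into a cactus by contracting at most `k` edges. -/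
def KContractibleToCactus {V : Type u} (G : SimpleGraph V) (k : ℕ) : Prop :=
  ∃ F : Set (Sym2 V), F ⊆ G.edgeSet ∧ F.ncard ≤ k ∧ IsCactus (contract G F)

/-- `G` has a tree decomposition of width at most `w`. -/
def HasTreewidthAtMost {V : Type u} (G : SimpleGraph V) (w : ℕ) : Prop :=
  ∃ (ι : Type u) (T : SimpleGraph ι) (β : ι → Set V),
    T.Connected ∧ T.IsAcyclic ∧
    (∀ x : V, ∃ i, x ∈ β i) ∧
    (∀ ⦃x y : V⦄, G.Adj x y → ∃ i, x ∈ β i ∧ y ∈ β i) ∧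
    (∀ (x : V) (i j : ι), x ∈ β i → x ∈ β j →
      ∀ p : T.Walk i j, p.IsPath → ∀ z ∈ p.support, x ∈ β z) ∧
    (∀ i, (β i).ncard ≤ w + 1)

section Aux
variable {Ω : Type} [Fintype Ω] [DecidableEq Ω]
set_option linter.unusedSectionVars false

/-- The "every edge on at most one cycle" property. -/
def auxCacProp (X : SimpleGraph Ω) : Prop :=
  ∀ (e : Sym2 Ω) (a b : Ω) (c₁ : X.Walk a a) (c₂ : X.Walk b b),
    c₁.IsCycle → c₂.IsCycle → e ∈ c₁.edges → e ∈ c₂.edges →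
    {e' | e' ∈ c₁.edges} = {e' | e' ∈ c₂.edges}

lemma aux_edges_mapLe {X Y : SimpleGraph Ω} (h : X ≤ Y) {a b : Ω} (p : X.Walk a b) :
    (p.mapLe h).edges = p.edges := by
  unfold SimpleGraph.Walk.mapLe
  rw [SimpleGraph.Walk.edges_map]
  have h2 : (Sym2.map ⇑(SimpleGraph.Hom.ofLE h)) = id := Sym2.map_id'
  simp [h2]

lemma auxCacProp_mono {X Y : SimpleGraph Ω} (h : X ≤ Y) (hY : auxCacProp Y) :
    auxCacProp X := by
  intro e a b c₁ c₂ h₁ h₂ he₁ he₂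
  have := hY e a b (c₁.mapLe h) (c₂.mapLe h) (h₁.mapLe h) (h₂.mapLe h)
    (by rwa [aux_edges_mapLe]) (by rwa [aux_edges_mapLe])
  rwa [aux_edges_mapLe, aux_edges_mapLe] at this

/-- Edge sets of cycles. -/
def auxCycSets (X : SimpleGraph Ω) : Set (Finset (Sym2 Ω)) :=
  {F | ∃ (a : Ω) (c : X.Walk a a), c.IsCycle ∧ F = c.edges.toFinset}

lemma auxCycSets_card {X : SimpleGraph Ω} {F : Finset (Sym2 Ω)} (hF : F ∈ auxCycSets X) :
    3 ≤ F.card := by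
  obtain ⟨a, c, hc, rfl⟩ := hF
  rw [List.toFinset_card_of_nodup hc.isTrail.edges_nodup, SimpleGraph.Walk.length_edges]
  exact hc.three_le_length

lemma auxCycSets_disj {X : SimpleGraph Ω} (hX : auxCacProp X) {F₁ F₂ : Finset (Sym2 Ω)}
    (h₁ : F₁ ∈ auxCycSets X) (h₂ : F₂ ∈ auxCycSets X) (hne : F₁ ≠ F₂) :
    Disjoint F₁ F₂ := by
  obtain ⟨a, c₁, hc₁, rfl⟩ := h₁
  obtain ⟨b, c₂, hc₂, rfl⟩ := h₂
  rw [Finset.disjoint_left]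
  intro e he₁ he₂
  rw [List.mem_toFinset] at he₁ he₂
  apply hne
  have := hX e a b c₁ c₂ hc₁ hc₂ he₁ he₂
  ext x
  simp only [List.mem_toFinset]
  exact Set.ext_iff.mp this x

lemma auxCycSets_subset {X : SimpleGraph Ω} {F : Finset (Sym2 Ω)} (hF : F ∈ auxCycSets X) :
    ↑F ⊆ X.edgeSet := by
  obtain ⟨a, c, hc, rfl⟩ := hF
  intro e he
  rw [Finset.mem_coe, List.mem_toFinset] at he
  exact c.edges_subset_edgeSet he

lemma aux_card_succ_le_of_surj {α β : Type} [Finite α] (f : α → β) (hf : Function.Surjective f)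
    (a₁ a₂ : α) (hne : a₁ ≠ a₂) (heq : f a₁ = f a₂) : Nat.card β + 1 ≤ Nat.card α := by
  have hβ : Finite β := Finite.of_surjective f hf
  set g := Function.surjInv hf with hg
  have hginj : Function.Injective g := Function.injective_surjInv hf
  have hmiss : a₁ ∉ Set.range g ∨ a₂ ∉ Set.range g := by
    by_contra hcon
    push_neg at hcon
    obtain ⟨⟨b₁, hb₁⟩, b₂, hb₂⟩ := hcon
    have e₁ : f a₁ = b₁ := by rw [← hb₁]; exact Function.surjInv_eq hf b₁
    have e₂ : f a₂ = b₂ := by rw [← hb₂]; exact Function.surjInv_eq hf b₂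
    have : b₁ = b₂ := by rw [← e₁, ← e₂, heq]
    exact hne (by rw [← hb₁, ← hb₂, this])
  have hr : Nat.card β = (Set.range g).ncard := by
    rw [← Nat.card_coe_set_eq, Nat.card_range_of_injective hginj]
  have hss : Set.range g ⊂ Set.univ := by
    rcases hmiss with h | h
    · exact ⟨Set.subset_univ _, fun hsub => h (hsub (Set.mem_univ a₁))⟩
    · exact ⟨Set.subset_univ _, fun hsub => h (hsub (Set.mem_univ a₂))⟩
  have := Set.ncard_lt_ncard hss Set.finite_univ
  rw [Set.ncard_univ] at this
  omega

lemma aux_reach_delete {X : SimpleGraph Ω} {u v : Ω}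
    (h : (X.deleteEdges {s(u,v)}).Reachable u v) {x y : Ω} (hxy : X.Reachable x y) :
    (X.deleteEdges {s(u,v)}).Reachable x y := by
  obtain ⟨q⟩ := hxy
  induction q with
  | nil => exact SimpleGraph.Reachable.refl _
  | @cons a b c hab q ihq =>
    refine SimpleGraph.Reachable.trans ?_ ihq
    by_cases heq : s(a, b) = s(u, v)
    · rw [Sym2.eq_iff] at heq
      rcases heq with ⟨rfl, rfl⟩ | ⟨rfl, rfl⟩
      · exact h
      · exact h.symm
    · refine SimpleGraph.Adj.reachable ?_
      rw [SimpleGraph.deleteEdges_adj]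
      exact ⟨hab, by simpa using heq⟩

/-- Key rank bound: #edges + #components ≤ #vertices + #cycles,
for graphs where any two cycles sharing an edge have the same edge set. -/
theorem aux_rank_bound (X : SimpleGraph Ω) (hX : auxCacProp X) :
    X.edgeSet.ncard + Nat.card X.ConnectedComponent ≤
      Fintype.card Ω + (auxCycSets X).ncard := by
  obtain ⟨n, hn⟩ : ∃ n, X.edgeSet.ncard = n := ⟨_, rfl⟩
  induction n generalizing X with
  | zero =>
    have hcc : Nat.card X.ConnectedComponent ≤ Fintype.card Ω := by
      have : Nat.card Ω = Fintype.card Ω := Nat.card_eq_fintype_card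
      rw [← this]
      exact Nat.card_le_card_of_surjective _ (fun c => c.exists_rep)
    omega
  | succ n ih =>
    have hpos : 0 < X.edgeSet.ncard := by omega
    have hne2 : X.edgeSet.Nonempty := by
      rw [← Set.ncard_pos (Set.toFinite _)]; exact hpos
    obtain ⟨e, he⟩ := hne2
    induction e using Sym2.ind with
    | _ u v =>
    have hadj : X.Adj u v := he
    set X' := X.deleteEdges {s(u,v)} with hX'def
    have hle : X' ≤ X := SimpleGraph.deleteEdges_le _
    have hE' : X'.edgeSet = X.edgeSet \ {s(u,v)} := SimpleGraph.edgeSet_deleteEdges _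
    have hn' : X'.edgeSet.ncard = n := by
      rw [hE', Set.ncard_diff_singleton_of_mem he, hn]
      omega
    have hcac' : auxCacProp X' := auxCacProp_mono hle hX
    have hIH := ih X' hcac' hn'
    set φ : X'.ConnectedComponent → X.ConnectedComponent :=
      SimpleGraph.ConnectedComponent.map (SimpleGraph.Hom.ofLE hle) with hφdef
    have hφmk : ∀ x : Ω, φ (X'.connectedComponentMk x) = X.connectedComponentMk x :=
      fun x => rfl
    have hφsurj : Function.Surjective φ := by
      intro C
      obtain ⟨x, rfl⟩ := C.exists_rep
      exact ⟨X'.connectedComponentMk x, hφmk x⟩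
    by_cases hbr : ∀ ⦃w : Ω⦄ (p : X.Walk w w), p.IsCycle → s(u,v) ∉ p.edges
    · -- bridge case
      have hcyceq : auxCycSets X' = auxCycSets X := by
        ext F
        constructor
        · rintro ⟨a, c, hc, rfl⟩
          exact ⟨a, c.mapLe hle, hc.mapLe hle, by rw [aux_edges_mapLe]⟩
        · rintro ⟨a, c, hc, rfl⟩
          have hedges : ∀ e' ∈ c.edges, e' ∈ X'.edgeSet := by
            intro e' he'
            rw [hE']
            refine ⟨c.edges_subset_edgeSet he', ?_⟩
            simp only [Set.mem_singleton_iff]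
            intro h'; exact hbr c hc (h' ▸ he')
          exact ⟨a, c.transfer X' hedges, hc.transfer _,
            by rw [SimpleGraph.Walk.edges_transfer]⟩
      have hbridge : X.IsBridge s(u,v) :=
        (SimpleGraph.isBridge_iff_forall_cycle_notMem he).mpr hbr
      have hnr : ¬ X'.Reachable u v := by
        rw [SimpleGraph.isBridge_iff] at hbridge
        exact hbridge
      have hccne : X'.connectedComponentMk u ≠ X'.connectedComponentMk v := by
        intro hcc
        exact hnr (SimpleGraph.ConnectedComponent.eq.mp hcc)
      have hcceq : φ (X'.connectedComponentMk u) = φ (X'.connectedComponentMk v) := by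
        rw [hφmk, hφmk]
        exact SimpleGraph.ConnectedComponent.sound hadj.reachable
      have hcard := aux_card_succ_le_of_surj φ hφsurj _ _ hccne hcceq
      rw [hcyceq] at hIH
      omega
    · -- non-bridge case
      push_neg at hbr
      obtain ⟨w, p, hpc, hpe⟩ := hbr
      have hreach : (X \ SimpleGraph.fromEdgeSet {s(u,v)}).Reachable u v :=
        (SimpleGraph.adj_and_reachable_delete_edges_iff_exists_cycle.mpr ⟨w, p, hpc, hpe⟩).2
      have hreach' : X'.Reachable u v := hreach
      have hφinj : Function.Injective φ := by
        intro C D hCD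
        obtain ⟨x, rfl⟩ := C.exists_rep
        obtain ⟨y, rfl⟩ := D.exists_rep
        have hr : X.Reachable x y := SimpleGraph.ConnectedComponent.eq.mp hCD
        exact SimpleGraph.ConnectedComponent.sound (aux_reach_delete hreach' hr)
      have hcardeq : Nat.card X'.ConnectedComponent = Nat.card X.ConnectedComponent :=
        Nat.card_eq_of_bijective φ ⟨hφinj, hφsurj⟩
      have hE₀ : p.edges.toFinset ∈ auxCycSets X := ⟨w, p, hpc, rfl⟩
      have hcyceq : auxCycSets X' = auxCycSets X \ {p.edges.toFinset} := by
        ext F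
        constructor
        · rintro ⟨a, c, hc, rfl⟩
          refine ⟨⟨a, c.mapLe hle, hc.mapLe hle, by rw [aux_edges_mapLe]⟩, ?_⟩
          simp only [Set.mem_singleton_iff]
          intro hFeq
          have hmem : s(u,v) ∈ c.edges := by
            have h1 : s(u,v) ∈ p.edges.toFinset := List.mem_toFinset.mpr hpe
            rw [← hFeq] at h1
            exact List.mem_toFinset.mp h1
          have h2 := c.edges_subset_edgeSet hmem
          rw [hE'] at h2
          exact h2.2 rfl
        · rintro ⟨⟨a, c, hc, rfl⟩, hne3⟩
          simp only [Set.mem_singleton_iff] at hne3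
          have hnotmem : s(u,v) ∉ c.edges := by
            intro hmem
            apply hne3
            have hseteq := hX s(u,v) a w c p hc hpc hmem hpe
            ext x
            simp only [List.mem_toFinset]
            exact Set.ext_iff.mp hseteq x
          have hedges : ∀ e' ∈ c.edges, e' ∈ X'.edgeSet := by
            intro e' he'
            rw [hE']
            refine ⟨c.edges_subset_edgeSet he', ?_⟩
            simp only [Set.mem_singleton_iff]
            intro h'; exact hnotmem (h' ▸ he')
          exact ⟨a, c.transfer X' hedges, hc.transfer _,
            by rw [SimpleGraph.Walk.edges_transfer]⟩
      have hcycpos : 1 ≤ (auxCycSets X).ncard :=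
        (Set.ncard_pos (Set.toFinite _)).mpr ⟨_, hE₀⟩
      have hcyccard : (auxCycSets X').ncard = (auxCycSets X).ncard - 1 := by
        rw [hcyceq]; exact Set.ncard_diff_singleton_of_mem hE₀
      omega

lemma aux_two_edges_start {X : SimpleGraph Ω} {v : Ω} (c : X.Walk v v) (hc : c.IsCycle) :
    ∃ x y : Ω, x ≠ y ∧ s(v, x) ∈ c.edges ∧ s(v, y) ∈ c.edges := by
  cases c with
  | nil => exact absurd hc SimpleGraph.Walk.IsCycle.not_of_nil
  | @cons _ w _ h p =>
    rw [SimpleGraph.Walk.cons_isCycle_iff] at hc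
    obtain ⟨hp, hne⟩ := hc
    have hnnil : ¬ p.reverse.Nil := SimpleGraph.Walk.not_nil_of_ne (h.ne)
    obtain ⟨z, hz, q, hq⟩ := SimpleGraph.Walk.not_nil_iff.mp hnnil
    have hzmem : s(v, z) ∈ p.edges := by
      have : s(v, z) ∈ p.reverse.edges := by rw [hq]; simp
      rwa [SimpleGraph.Walk.edges_reverse, List.mem_reverse] at this
    have hwz : w ≠ z := by
      intro hwzeq
      subst hwzeq
      exact hne hzmem
    exact ⟨w, z, hwz, by simp, by simp [hzmem]⟩

lemma aux_two_edges {X : SimpleGraph Ω} {a v : Ω} {c : X.Walk a a} (hc : c.IsCycle)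
    (hv : v ∈ c.support) :
    ∃ x y : Ω, x ≠ y ∧ s(v, x) ∈ c.edges ∧ s(v, y) ∈ c.edges := by
  obtain ⟨x, y, hxy, h1, h2⟩ := aux_two_edges_start (c.rotate v hv) (hc.rotate hv)
  have hperm := (SimpleGraph.Walk.rotate_edges c v hv).perm
  exact ⟨x, y, hxy, hperm.mem_iff.mp h1, hperm.mem_iff.mp h2⟩

lemma aux_isolated_reach {X : SimpleGraph Ω} {x z : Ω} (hiso : ∀ y, ¬ X.Adj x y)
    (h : X.Reachable x z) : x = z := by
  obtain ⟨q⟩ := h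
  cases q with
  | nil => rfl
  | cons hadj q => exact absurd hadj (hiso _)

lemma aux_disj_card {γ : Type} [DecidableEq γ] (S : Set (Finset γ)) (hfin : S.Finite)
    (hdisj : ∀ F₁ ∈ S, ∀ F₂ ∈ S, F₁ ≠ F₂ → Disjoint F₁ F₂)
    (T : Finset γ) (hsub : ∀ F ∈ S, F ⊆ T) (m : ℕ) (hm : ∀ F ∈ S, m ≤ F.card) :
    m * S.ncard ≤ T.card := by
  classical
  set S' := hfin.toFinset with hS'
  have hcard : S.ncard = S'.card := Set.ncard_eq_toFinset_card _ hfin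
  have h1 : m * S'.card ≤ ∑ F ∈ S', F.card := by
    calc m * S'.card = ∑ _F ∈ S', m := by rw [Finset.sum_const, smul_eq_mul, mul_comm]
    _ ≤ ∑ F ∈ S', F.card := Finset.sum_le_sum (fun F hF => hm F (hfin.mem_toFinset.mp hF))
  have h2 : ∑ F ∈ S', F.card = (S'.biUnion (fun F => F)).card :=
    (Finset.card_biUnion (fun x hx y hy hxy =>
      hdisj x (hfin.mem_toFinset.mp hx) y (hfin.mem_toFinset.mp hy) hxy)).symm
  have h3 : S'.biUnion (fun F => F) ⊆ T := by
    intro e he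
    rw [Finset.mem_biUnion] at he
    obtain ⟨F, hF, heF⟩ := he
    exact hsub F (hfin.mem_toFinset.mp hF) heF
  calc m * S.ncard = m * S'.card := by rw [hcard]
  _ ≤ ∑ F ∈ S', F.card := h1
  _ = (S'.biUnion (fun F => F)).card := h2
  _ ≤ T.card := Finset.card_le_card h3

/-- The restriction of a graph to a finset. -/
def auxRestrict (X : SimpleGraph Ω) (A : Finset Ω) : SimpleGraph Ω where
  Adj x y := X.Adj x y ∧ x ∈ A ∧ y ∈ A
  symm := by constructor; rintro x y ⟨h, hx, hy⟩; exact ⟨h.symm, hy, hx⟩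
  loopless := by constructor; rintro x ⟨h, -, -⟩; exact X.irrefl h

lemma auxRestrict_le (X : SimpleGraph Ω) (A : Finset Ω) : auxRestrict X A ≤ X :=
  fun _ _ h => h.1

lemma aux_min_degree (X : SimpleGraph Ω) [DecidableRel X.Adj] (hX : auxCacProp X) (A : Finset Ω)
    (hA : A.Nonempty) : ∃ w ∈ A, (A.filter (fun y => X.Adj w y)).card ≤ 2 := by
  classical
  by_contra hcon
  push_neg at hcon
  set Y := auxRestrict X A with hYdef
  have hYle : Y ≤ X := auxRestrict_le X A
  have hcac : auxCacProp Y := auxCacProp_mono hYle hX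
  have hrank := aux_rank_bound Y hcac
  obtain ⟨a₀, ha₀⟩ := hA
  have hiso : ∀ x, x ∉ A → ∀ y, ¬ Y.Adj x y := by
    intro x hx y hadj
    exact hx hadj.2.1
  have hccge : Aᶜ.card + 1 ≤ Nat.card Y.ConnectedComponent := by
    have hinj : Function.Injective (fun z : ((Aᶜ : Finset Ω) ⊕ Unit) =>
        match z with
        | Sum.inl x => Y.connectedComponentMk x.1
        | Sum.inr _ => Y.connectedComponentMk a₀) := by
      intro z₁ z₂ hz
      match z₁, z₂ with
      | Sum.inl x, Sum.inl y =>
        simp only at hz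
        have hr := SimpleGraph.ConnectedComponent.eq.mp hz
        have hx : (x.1 : Ω) ∉ A := Finset.mem_compl.mp x.2
        have := aux_isolated_reach (hiso x.1 hx) hr
        simp only [Sum.inl.injEq]
        exact Subtype.ext this
      | Sum.inl x, Sum.inr _ =>
        simp only at hz
        have hr := SimpleGraph.ConnectedComponent.eq.mp hz
        have hx : (x.1 : Ω) ∉ A := Finset.mem_compl.mp x.2
        have := aux_isolated_reach (hiso x.1 hx) hr
        exact absurd (this ▸ ha₀) hx
      | Sum.inr _, Sum.inl x =>
        simp only at hz
        have hr := SimpleGraph.ConnectedComponent.eq.mp hz.symm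
        have hx : (x.1 : Ω) ∉ A := Finset.mem_compl.mp x.2
        have := aux_isolated_reach (hiso x.1 hx) hr
        exact absurd (this ▸ ha₀) hx
      | Sum.inr _, Sum.inr _ => rfl
    have hle := Nat.card_le_card_of_injective _ hinj
    rwa [Nat.card_sum, Nat.card_eq_fintype_card, Nat.card_eq_fintype_card,
      Fintype.card_coe, Fintype.card_unit] at hle
  have hcyc : 3 * (auxCycSets Y).ncard ≤ (Set.toFinite Y.edgeSet).toFinset.card := by
    refine aux_disj_card _ (Set.toFinite _) (fun F₁ h₁ F₂ h₂ hne => auxCycSets_disj hcac h₁ h₂ hne)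
      _ ?_ 3 (fun F hF => auxCycSets_card hF)
    intro F hF e he
    exact (Set.Finite.mem_toFinset _).mpr (auxCycSets_subset hF he)
  have hEcard : Y.edgeSet.ncard = (Set.toFinite Y.edgeSet).toFinset.card :=
    Set.ncard_eq_toFinset_card _ _
  -- handshake
  letI hdr : DecidableRel Y.Adj := Classical.decRel _
  have hhs : ∑ w : Ω, Y.degree w = 2 * Y.edgeFinset.card :=
    SimpleGraph.sum_degrees_eq_twice_card_edges Y
  have hEF : Y.edgeFinset.card = Y.edgeSet.ncard :=
    (Set.ncard_eq_toFinset_card' _).symm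
  have hdegA : ∀ w ∈ A, 3 ≤ Y.degree w := by
    intro w hw
    have hfe : Finset.univ.filter (fun y => Y.Adj w y) = A.filter (fun y => X.Adj w y) := by
      ext y
      simp only [Finset.mem_filter, Finset.mem_univ, true_and]
      constructor
      · rintro ⟨h, -, hy⟩; exact ⟨hy, h⟩
      · rintro ⟨hy, h⟩; exact ⟨h, hw, hy⟩
    have hdw : Y.degree w = (A.filter (fun y => X.Adj w y)).card := by
      rw [SimpleGraph.degree, SimpleGraph.neighborFinset_eq_filter, hfe]
    have := hcon w hw
    omega
  have hsum : 3 * A.card ≤ ∑ w : Ω, Y.degree w := by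
    calc 3 * A.card = ∑ _w ∈ A, 3 := by rw [Finset.sum_const, smul_eq_mul, mul_comm]
    _ ≤ ∑ w ∈ A, Y.degree w := Finset.sum_le_sum hdegA
    _ ≤ ∑ w : Ω, Y.degree w := Finset.sum_le_sum_of_subset (Finset.subset_univ A)
  have hAcompl : Aᶜ.card = Fintype.card Ω - A.card := Finset.card_compl A
  have hAle : A.card ≤ Fintype.card Ω := Finset.card_le_univ A
  omega

lemma aux_color (X : SimpleGraph Ω) [DecidableRel X.Adj] (hX : auxCacProp X) (A : Finset Ω) :
    ∃ κ : Ω → Fin 3, ∀ t ∈ A, ∀ t' ∈ A, X.Adj t t' → κ t ≠ κ t' := by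
  classical
  obtain ⟨n, hn⟩ : ∃ n, A.card = n := ⟨_, rfl⟩
  induction n generalizing A with
  | zero =>
    have hAe : A = ∅ := Finset.card_eq_zero.mp hn
    subst hAe
    exact ⟨fun _ => 0, by simp⟩
  | succ n ih =>
    have hA : A.Nonempty := by rw [← Finset.card_pos]; omega
    obtain ⟨w, hwA, hdeg⟩ := aux_min_degree X hX A hA
    obtain ⟨κ', hκ'⟩ := ih (A.erase w) (by rw [Finset.card_erase_of_mem hwA, hn]; omega)
    set NA := A.filter (fun y => X.Adj w y) with hNAdef
    have himg : (NA.image κ').card ≤ 2 := le_trans Finset.card_image_le hdeg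
    have hcompl : ((NA.image κ')ᶜ : Finset (Fin 3)).Nonempty := by
      rw [← Finset.card_pos, Finset.card_compl]
      simp only [Fintype.card_fin]
      omega
    obtain ⟨c, hc⟩ := hcompl
    rw [Finset.mem_compl] at hc
    refine ⟨Function.update κ' w c, ?_⟩
    intro t ht t' ht' hadj
    by_cases htw : t = w <;> by_cases ht'w : t' = w
    · subst htw; subst ht'w; exact absurd hadj (X.irrefl)
    · subst htw
      rw [Function.update_self, Function.update_of_ne ht'w]
      intro hceq
      apply hc
      rw [hceq]
      exact Finset.mem_image_of_mem κ' (Finset.mem_filter.mpr ⟨ht', hadj⟩)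
    · subst ht'w
      rw [Function.update_of_ne htw, Function.update_self]
      intro hceq
      apply hc
      rw [← hceq]
      exact Finset.mem_image_of_mem κ' (Finset.mem_filter.mpr ⟨ht, hadj.symm⟩)
    · rw [Function.update_of_ne htw, Function.update_of_ne ht'w]
      exact hκ' t (Finset.mem_erase.mpr ⟨htw, ht⟩) t' (Finset.mem_erase.mpr ⟨ht'w, ht'⟩) hadj

/-! ### Cable path lists -/

lemma aux_getElem_congr {l : List Ω} {a b : ℕ} (h : a = b) (ha : a < l.length)
    (hb : b < l.length) : l[a]'ha = l[b]'hb := by subst h; rfl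

/-- A valid cable path between two big witness sets through small ones. -/
def auxValid (T : SimpleGraph Ω) (P : Ω → Prop) (l : List Ω) : Prop :=
  IsCablePath T l ∧ 3 ≤ l.length ∧
  (∀ h : 0 < l.length, P (l[0]'h)) ∧
  (∀ h : l.length - 1 < l.length, P (l[l.length - 1]'h)) ∧
  (∀ (i : ℕ) (h : i < l.length), 1 ≤ i → i < l.length - 1 → ¬ P (l[i]'h))

variable {T : SimpleGraph Ω} {P : Ω → Prop}

lemma auxValid_nbr {l : List Ω} (hl : auxValid T P l) {i : ℕ} (h1 : 1 ≤ i)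
    (h2 : i + 1 < l.length) (y : Ω) :
    T.Adj (l[i]'(by omega)) y ↔ (y = l[i-1]'(by omega) ∨ y = l[i+1]'h2) := by
  have := hl.1.2.2.2 i h2 h1 y
  simpa [List.get_eq_getElem] using this

lemma auxValid_adj {l : List Ω} (hl : auxValid T P l) {i : ℕ} (h2 : i + 1 < l.length) :
    T.Adj (l[i]'(by omega)) (l[i+1]'h2) := by
  have hch : List.IsChain T.Adj l := hl.1.2.2.1
  rw [List.isChain_iff_getElem] at hch
  have := hch i (by omega)
  simpa [List.get_eq_getElem] using this

lemma auxValid_nodup {l : List Ω} (hl : auxValid T P l) : l.Nodup := hl.1.2.1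

lemma aux_nodup_inj {l : List Ω} (hl : l.Nodup) {i j : ℕ} (hi : i < l.length)
    (hj : j < l.length) (heq : l[i]'hi = l[j]'hj) : i = j := by
  have h := List.nodup_iff_injective_get.mp hl
    (show l.get ⟨i, hi⟩ = l.get ⟨j, hj⟩ by simpa [List.get_eq_getElem] using heq)
  exact congrArg Fin.val h

lemma auxValid_big_iff {l : List Ω} (hl : auxValid T P l) {i : ℕ} (h : i < l.length) :
    P (l[i]'h) ↔ (i = 0 ∨ i = l.length - 1) := by
  have hlen := hl.2.1
  constructor
  · intro hp
    by_contra hcon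
    push_neg at hcon
    exact hl.2.2.2.2 i h (by omega) (by omega) hp
  · rintro (rfl | rfl)
    · exact hl.2.2.1 _
    · exact hl.2.2.2.1 _

lemma auxValid_reverse {l : List Ω} (hl : auxValid T P l) : auxValid T P l.reverse := by
  have hlen := hl.2.1
  have hlr : l.reverse.length = l.length := List.length_reverse
  obtain ⟨⟨hne, hnd, hch, hnb⟩, -, h0, hL, hint⟩ := hl
  refine ⟨⟨by simpa using hne, by simpa using hnd, ?_, ?_⟩, by omega, ?_, ?_, ?_⟩
  · show List.IsChain T.Adj l.reverse
    rw [List.isChain_reverse]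
    exact List.IsChain.imp (fun a b h => h.symm) hch
  · intro i h2 h1 y
    have h2' : i + 1 < l.length := by omega
    have e0 : l.reverse.get ⟨i, by omega⟩ = l[l.length - 1 - i]'(by omega) := by
      simp [List.get_eq_getElem, List.getElem_reverse]
    have em : l.reverse.get ⟨i - 1, by omega⟩ = l[(l.length - 1 - i) + 1]'(by omega) := by
      simp only [List.get_eq_getElem, List.getElem_reverse]
      exact aux_getElem_congr (by omega) _ _
    have ep : l.reverse.get ⟨i + 1, h2⟩ = l[(l.length - 1 - i) - 1]'(by omega) := by
      simp only [List.get_eq_getElem, List.getElem_reverse]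
      exact aux_getElem_congr (by omega) _ _
    rw [e0, em, ep]
    have hbase := hnb (l.length - 1 - i) (by omega) (by omega) y
    simp only [List.get_eq_getElem] at hbase
    rw [hbase]
    exact or_comm
  · intro h
    have : l.reverse[0]'h = l[l.length - 1]'(by omega) := by
      simp only [List.getElem_reverse]
      exact aux_getElem_congr (by omega) _ _
    rw [this]
    exact hL _
  · intro h
    have : l.reverse[l.reverse.length - 1]'h = l[0]'(by omega) := by
      simp only [List.getElem_reverse]
      exact aux_getElem_congr (by omega) _ _
    rw [this]
    exact h0 _
  · intro i h hi1 hi2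
    have : l.reverse[i]'h = l[l.length - 1 - i]'(by omega) := by
      simp only [List.getElem_reverse]
    rw [this]
    exact hint _ _ (by omega) (by omega)

lemma aux_step {l m : List Ω} (hl : auxValid T P l) (hm : auxValid T P m)
    {a c : ℕ} (ha2 : a + 2 < l.length) (hc1 : c + 1 < m.length)
    (e0 : l[a]'(by omega) = m[c]'(by omega))
    (e1 : l[a+1]'(by omega) = m[c+1]'hc1) :
    ∃ hc2 : c + 2 < m.length, l[a+2]'ha2 = m[c+2]'hc2 := by
  have hlen := hl.2.1
  have hmlen := hm.2.1
  have hnbig : ¬ P (l[a+1]'(by omega)) := hl.2.2.2.2 (a+1) (by omega) (by omega) (by omega)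
  have hmc1 : c + 1 < m.length - 1 := by
    rcases (auxValid_big_iff hm hc1).not.mp (by rw [← e1]; exact hnbig) |> not_or.mp with ⟨h1, h2⟩
    omega
  have hc2 : c + 2 < m.length := by omega
  have hadj : T.Adj (l[a+1]'(by omega)) (l[a+2]'ha2) := auxValid_adj hl (by omega)
  rw [e1] at hadj
  have hiff := auxValid_nbr hm (i := c+1) (by omega) (by omega) (l[a+2]'ha2)
  rw [hiff] at hadj
  rcases hadj with hcase | hcase
  · exfalso
    have heq2 : l[a+2]'ha2 = l[a]'(by omega) := by
      rw [hcase, aux_getElem_congr (show c + 1 - 1 = c by omega) _ (by omega)]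
      exact e0.symm
    have := aux_nodup_inj (auxValid_nodup hl) _ _ heq2
    omega
  · exact ⟨hc2, by rw [hcase]⟩

lemma aux_align {l m : List Ω} (hl : auxValid T P l) (hm : auxValid T P m)
    {i j : ℕ} (hi1 : i + 1 < l.length) (hj1 : j + 1 < m.length)
    (e0 : l[i]'(by omega) = m[j]'(by omega))
    (e1 : l[i+1]'hi1 = m[j+1]'hj1) :
    ∀ (d : ℕ) (hd : i + d < l.length), ∃ h : j + d < m.length, l[i+d]'hd = m[j+d]'h := by
  suffices hS : ∀ d : ℕ,
      (∀ (hd : i + d < l.length), ∃ h : j + d < m.length, l[i+d]'hd = m[j+d]'h) ∧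
      (∀ (hd : i + d + 1 < l.length), ∃ h : j + d + 1 < m.length, l[i+d+1]'hd = m[j+d+1]'h) by
    intro d hd
    exact (hS d).1 hd
  intro d
  induction d with
  | zero =>
    exact ⟨fun hd => ⟨by omega, e0⟩, fun hd => ⟨by omega, e1⟩⟩
  | succ n ih =>
    refine ⟨fun hd => ?_, fun hd => ?_⟩
    · obtain ⟨h', e'⟩ := ih.2 (by omega)
      exact ⟨by omega, e'⟩
    · obtain ⟨h0', e0'⟩ := ih.1 (by omega)
      obtain ⟨h1', e1'⟩ := ih.2 (by omega)
      obtain ⟨hc2, e2⟩ := aux_step hl hm (a := i+n) (c := j+n) (by omega) h1' e0' e1'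
      exact ⟨by omega, e2⟩

lemma aux_align_end {l m : List Ω} (hl : auxValid T P l) (hm : auxValid T P m)
    {i j : ℕ} (hi1 : i + 1 < l.length) (hj1 : j + 1 < m.length)
    (e0 : l[i]'(by omega) = m[j]'(by omega))
    (e1 : l[i+1]'hi1 = m[j+1]'hj1) :
    l.length - i = m.length - j := by
  have hlen := hl.2.1
  have hmlen := hm.2.1
  obtain ⟨hj', he⟩ := aux_align hl hm hi1 hj1 e0 e1 (l.length - 1 - i) (by omega)
  have hbig : P (l[i + (l.length - 1 - i)]'(by omega)) := by
    rw [aux_getElem_congr (show i + (l.length - 1 - i) = l.length - 1 by omega) _ (by omega)]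
    exact hl.2.2.2.1 _
  rw [he] at hbig
  have := (auxValid_big_iff hm hj').mp hbig
  omega

lemma aux_unique_dir {l m : List Ω} (hl : auxValid T P l) (hm : auxValid T P m)
    {i j : ℕ} (hi0 : 1 ≤ i) (hi1 : i + 1 < l.length) (hj0 : 1 ≤ j) (hj1 : j + 1 < m.length)
    (e0 : l[i]'(by omega) = m[j]'(by omega))
    (e1 : l[i+1]'hi1 = m[j+1]'hj1) :
    l = m := by
  have hlen := hl.2.1
  have hmlen := hm.2.1
  -- backwards via reverses
  have hlr := auxValid_reverse hl
  have hmr := auxValid_reverse hm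
  have hlrl : l.reverse.length = l.length := List.length_reverse
  have hmrl : m.reverse.length = m.length := List.length_reverse
  have er0 : l.reverse[l.length - 1 - i]'(by omega) = m.reverse[m.length - 1 - j]'(by omega) := by
    rw [List.getElem_reverse, List.getElem_reverse]
    rw [aux_getElem_congr (show l.length - 1 - (l.length - 1 - i) = i by omega) _ (by omega)]
    rw [aux_getElem_congr (show m.length - 1 - (m.length - 1 - j) = j by omega) _ (by omega)]
    exact e0
  -- we also need l[i-1] = m[j-1]
  have em1 : l[i-1]'(by omega) = m[j-1]'(by omega) := by
    have hadj : T.Adj (l[i]'(by omega)) (l[i-1]'(by omega)) := by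
      have := auxValid_adj hl (i := i-1) (by omega)
      rw [aux_getElem_congr (show i - 1 + 1 = i by omega) _ (by omega)] at this
      exact this.symm
    rw [e0] at hadj
    rw [auxValid_nbr hm (i := j) hj0 hj1] at hadj
    rcases hadj with hcase | hcase
    · exact hcase
    · exfalso
      rw [← e1] at hcase
      have := aux_nodup_inj (auxValid_nodup hl) _ _ hcase
      omega
  have er1 : l.reverse[(l.length - 1 - i) + 1]'(by omega) =
      m.reverse[(m.length - 1 - j) + 1]'(by omega) := by
    rw [List.getElem_reverse, List.getElem_reverse]
    rw [aux_getElem_congr (show l.length - 1 - (l.length - 1 - i + 1) = i - 1 by omega) _ (by omega)]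
    rw [aux_getElem_congr (show m.length - 1 - (m.length - 1 - j + 1) = j - 1 by omega) _ (by omega)]
    exact em1
  have hend1 : l.length - i = m.length - j := aux_align_end hl hm hi1 hj1 e0 e1
  have hend2 : l.reverse.length - (l.length - 1 - i) = m.reverse.length - (m.length - 1 - j) :=
    aux_align_end hlr hmr (by omega) (by omega) er0 er1
  have hij : i = j := by omega
  have hlm : l.length = m.length := by omega
  subst hij
  refine List.ext_getElem hlm ?_
  intro n hn hn'
  by_cases hni : i ≤ n
  · obtain ⟨h', e'⟩ := aux_align hl hm hi1 hj1 e0 e1 (n - i) (by omega)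
    rw [aux_getElem_congr (show n = i + (n - i) by omega) _ (by omega),
      aux_getElem_congr (show n = i + (n - i) by omega) _ (by omega)]
    exact e'
  · obtain ⟨h', e'⟩ := aux_align hlr hmr (i := l.length - 1 - i) (j := m.length - 1 - i)
      (by omega) (by omega) er0 er1 ((l.length - 1 - n) - (l.length - 1 - i)) (by omega)
    rw [List.getElem_reverse, List.getElem_reverse] at e'
    rw [aux_getElem_congr
      (show n = l.length - 1 - (l.length - 1 - i + (l.length - 1 - n - (l.length - 1 - i))) by omega)
      _ (by omega),
      aux_getElem_congr
      (show n = m.length - 1 - (m.length - 1 - i + (l.length - 1 - n - (l.length - 1 - i))) by omega)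
      _ (by omega)]
    exact e'

lemma aux_unique {l m : List Ω} (hl : auxValid T P l) (hm : auxValid T P m)
    {i j : ℕ} (hi0 : 1 ≤ i) (hi1 : i + 1 < l.length) (hj0 : 1 ≤ j) (hj1 : j + 1 < m.length)
    (e0 : l[i]'(by omega) = m[j]'(by omega)) :
    l = m ∨ l = m.reverse := by
  have hlen := hl.2.1
  have hmlen := hm.2.1
  have hadj : T.Adj (l[i]'(by omega)) (l[i+1]'hi1) := auxValid_adj hl hi1
  rw [e0, auxValid_nbr hm (i := j) hj0 hj1] at hadj
  rcases hadj with hcase | hcase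
  · -- l[i+1] = m[j-1] : use m.reverse
    right
    have hmr := auxValid_reverse hm
    have hmrl : m.reverse.length = m.length := List.length_reverse
    refine aux_unique_dir hl hmr (i := i) (j := m.length - 1 - j) hi0 hi1 (by omega) (by omega)
      ?_ ?_
    · rw [List.getElem_reverse,
        aux_getElem_congr (show m.length - 1 - (m.length - 1 - j) = j by omega) _ (by omega)]
      exact e0
    · rw [List.getElem_reverse,
        aux_getElem_congr (show m.length - 1 - (m.length - 1 - j + 1) = j - 1 by omega) _ (by omega)]
      exact hcase
  · exact Or.inl (aux_unique_dir hl hm hi0 hi1 hj0 hj1 e0 hcase)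


/-! ### Edge lists of cable paths -/

def auxEdges (l : List Ω) : List (Sym2 Ω) := (l.zip l.tail).map (fun p => s(p.1, p.2))

lemma auxEdges_length (l : List Ω) : (auxEdges l).length = l.length - 1 := by
  simp only [auxEdges, List.length_map, List.length_zip, List.length_tail]
  omega

lemma auxEdges_getElem (l : List Ω) {i : ℕ} (h : i < (auxEdges l).length) :
    (auxEdges l)[i]'h =
      s(l[i]'(by have := auxEdges_length l; omega),
        l[i+1]'(by have := auxEdges_length l; omega)) := by
  simp only [auxEdges, List.getElem_map, List.getElem_zip, List.getElem_tail]

lemma auxEdges_mem {l : List Ω} {e : Sym2 Ω} :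
    e ∈ auxEdges l ↔ ∃ (i : ℕ) (h : i + 1 < l.length),
      e = s(l[i]'(by omega), l[i+1]'h) := by
  rw [List.mem_iff_getElem]
  constructor
  · rintro ⟨i, h, he⟩
    have hlen := auxEdges_length l
    exact ⟨i, by omega, by rw [← he, auxEdges_getElem]⟩
  · rintro ⟨i, h, he⟩
    have hlen := auxEdges_length l
    exact ⟨i, by omega, by rw [auxEdges_getElem]; exact he.symm⟩

lemma auxEdges_nodup {l : List Ω} (hl : l.Nodup) : (auxEdges l).Nodup := by
  rw [List.nodup_iff_injective_get]
  intro a b hab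
  have hlen := auxEdges_length l
  have ha := a.2
  have hb := b.2
  rw [List.get_eq_getElem, List.get_eq_getElem, auxEdges_getElem, auxEdges_getElem,
    Sym2.eq_iff] at hab
  rcases hab with ⟨h1, h2⟩ | ⟨h1, h2⟩
  · exact Fin.ext (aux_nodup_inj hl _ _ h1)
  · have e1 := aux_nodup_inj hl _ _ h1
    have e2 := aux_nodup_inj hl _ _ h2
    exact Fin.ext (by omega)

variable {T : SimpleGraph Ω} {P : Ω → Prop}

lemma auxValid_edges_subset {l : List Ω} (hl : auxValid T P l) {e : Sym2 Ω}
    (he : e ∈ auxEdges l) : e ∈ T.edgeSet := by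
  obtain ⟨i, h, rfl⟩ := auxEdges_mem.mp he
  exact auxValid_adj hl h

lemma auxEdges_reverse_toFinset (l : List Ω) :
    (auxEdges l.reverse).toFinset = (auxEdges l).toFinset := by
  have hlr : l.reverse.length = l.length := List.length_reverse
  ext e
  simp only [List.mem_toFinset, auxEdges_mem]
  constructor
  · rintro ⟨i, h, rfl⟩
    refine ⟨l.length - 2 - i, by omega, ?_⟩
    rw [List.getElem_reverse, List.getElem_reverse,
      aux_getElem_congr (show l.length - 1 - i = l.length - 2 - i + 1 by omega) _ (by omega),
      aux_getElem_congr (show l.length - 1 - (i+1) = l.length - 2 - i by omega) _ (by omega)]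
    exact Sym2.eq_swap
  · rintro ⟨i, h, rfl⟩
    refine ⟨l.length - 2 - i, by omega, ?_⟩
    rw [List.getElem_reverse, List.getElem_reverse,
      aux_getElem_congr (show l.length - 1 - (l.length - 2 - i) = i + 1 by omega) _ (by omega),
      aux_getElem_congr (show l.length - 1 - (l.length - 2 - i + 1) = i by omega) _ (by omega)]
    exact Sym2.eq_swap

lemma aux_unique_edge {l m : List Ω} (hl : auxValid T P l) (hm : auxValid T P m)
    {e : Sym2 Ω} (hel : e ∈ auxEdges l) (hem : e ∈ auxEdges m) :
    l = m ∨ l = m.reverse := by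
  have hlen := hl.2.1
  have hmlen := hm.2.1
  obtain ⟨i, hi, rfl⟩ := auxEdges_mem.mp hel
  obtain ⟨j, hj, hesym⟩ := auxEdges_mem.mp hem
  rw [Sym2.eq_iff] at hesym
  rcases hesym with ⟨h1, h2⟩ | ⟨h1, h2⟩
  · by_cases hi1 : 1 ≤ i
    · have hnb : ¬ P (m[j]'(by omega)) := by
        rw [← h1]
        exact hl.2.2.2.2 i (by omega) hi1 (by omega)
      have hj0 : ¬ (j = 0 ∨ j = m.length - 1) := fun hc => hnb ((auxValid_big_iff hm _).mpr hc)
      push_neg at hj0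
      exact aux_unique hl hm hi1 hi (by omega) hj h1
    · have hi0 : i = 0 := by omega
      subst hi0
      have hnb : ¬ P (m[j+1]'hj) := by
        rw [← h2]
        exact hl.2.2.2.2 1 (by omega) (by omega) (by omega)
      have hj1 : ¬ (j + 1 = 0 ∨ j + 1 = m.length - 1) :=
        fun hc => hnb ((auxValid_big_iff hm _).mpr hc)
      push_neg at hj1
      exact aux_unique hl hm (i := 1) (j := j+1) (by omega) (by omega) (by omega) (by omega) h2
  · by_cases hi1 : 1 ≤ i
    · have hnb : ¬ P (m[j+1]'hj) := by
        rw [← h1]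
        exact hl.2.2.2.2 i (by omega) hi1 (by omega)
      have hj1 : ¬ (j + 1 = 0 ∨ j + 1 = m.length - 1) :=
        fun hc => hnb ((auxValid_big_iff hm _).mpr hc)
      push_neg at hj1
      exact aux_unique hl hm (i := i) (j := j+1) hi1 hi (by omega) (by omega) h1
    · have hi0 : i = 0 := by omega
      subst hi0
      have hnb : ¬ P (m[j]'(by omega)) := by
        rw [← h2]
        exact hl.2.2.2.2 1 (by omega) (by omega) (by omega)
      have hj0 : ¬ (j = 0 ∨ j = m.length - 1) := fun hc => hnb ((auxValid_big_iff hm _).mpr hc)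
      push_neg at hj0
      exact aux_unique hl hm (i := 1) (j := j) (by omega) (by omega) (by omega) hj h2

/-- The set of edge sets of valid cable paths. -/
def auxPF (T : SimpleGraph Ω) (P : Ω → Prop) : Set (Finset (Sym2 Ω)) :=
  {F | ∃ l : List Ω, auxValid T P l ∧ F = (auxEdges l).toFinset}

lemma auxPF_eq_of_shared {l m : List Ω} (hl : auxValid T P l) (hm : auxValid T P m)
    {e : Sym2 Ω} (hel : e ∈ auxEdges l) (hem : e ∈ auxEdges m) :
    (auxEdges l).toFinset = (auxEdges m).toFinset := by
  rcases aux_unique_edge hl hm hel hem with rfl | rfl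
  · rfl
  · exact auxEdges_reverse_toFinset m

lemma auxPF_disj {F₁ F₂ : Finset (Sym2 Ω)} (h₁ : F₁ ∈ auxPF T P) (h₂ : F₂ ∈ auxPF T P)
    (hne : F₁ ≠ F₂) : Disjoint F₁ F₂ := by
  obtain ⟨l, hl, rfl⟩ := h₁
  obtain ⟨m, hm, rfl⟩ := h₂
  rw [Finset.disjoint_left]
  intro e he₁ he₂
  rw [List.mem_toFinset] at he₁ he₂
  exact hne (auxPF_eq_of_shared hl hm he₁ he₂)

lemma aux_cc_count (Y : SimpleGraph Ω) (U : Finset Ω)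
    (hiso : ∀ x, x ∉ U → ∀ y, ¬ Y.Adj x y) (u₀ : Ω) (hu₀ : u₀ ∈ U) :
    Uᶜ.card + 1 ≤ Nat.card Y.ConnectedComponent := by
  classical
  have hinj : Function.Injective (fun z : ((Uᶜ : Finset Ω) ⊕ Unit) =>
      match z with
      | Sum.inl x => Y.connectedComponentMk x.1
      | Sum.inr _ => Y.connectedComponentMk u₀) := by
    intro z₁ z₂ hz
    match z₁, z₂ with
    | Sum.inl x, Sum.inl y =>
      simp only at hz
      have hr := SimpleGraph.ConnectedComponent.eq.mp hz
      have hx : (x.1 : Ω) ∉ U := Finset.mem_compl.mp x.2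
      have := aux_isolated_reach (hiso x.1 hx) hr
      simp only [Sum.inl.injEq]
      exact Subtype.ext this
    | Sum.inl x, Sum.inr _ =>
      simp only at hz
      have hr := SimpleGraph.ConnectedComponent.eq.mp hz
      have hx : (x.1 : Ω) ∉ U := Finset.mem_compl.mp x.2
      have := aux_isolated_reach (hiso x.1 hx) hr
      exact absurd (this ▸ hu₀) hx
    | Sum.inr _, Sum.inl x =>
      simp only at hz
      have hr := SimpleGraph.ConnectedComponent.eq.mp hz.symm
      have hx : (x.1 : Ω) ∉ U := Finset.mem_compl.mp x.2
      have := aux_isolated_reach (hiso x.1 hx) hr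
      exact absurd (this ▸ hu₀) hx
    | Sum.inr _, Sum.inr _ => rfl
  have hle := Nat.card_le_card_of_injective _ hinj
  rwa [Nat.card_sum, Nat.card_eq_fintype_card, Nat.card_eq_fintype_card,
    Fintype.card_coe, Fintype.card_unit] at hle

lemma aux_path_count (T : SimpleGraph Ω) (P : Ω → Prop) (hT : auxCacProp T)
    (Bfin : Finset Ω) (hBfin : ∀ w, P w → w ∈ Bfin) :
    (auxPF T P).ncard ≤ 2 * Bfin.card := by
  classical
  set PFfin := (Set.toFinite (auxPF T P)).toFinset with hPFdef
  have hPFmem : ∀ F, F ∈ PFfin ↔ F ∈ auxPF T P := fun F => Set.Finite.mem_toFinset _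
  have hPFcard : (auxPF T P).ncard = PFfin.card := Set.ncard_eq_toFinset_card _ _
  rcases Finset.eq_empty_or_nonempty PFfin with hPF0 | ⟨F₀, hF₀⟩
  · rw [hPFcard, hPF0]
    simp
  -- choose representatives
  have hrepex : ∀ F : Finset (Sym2 Ω), F ∈ PFfin →
      ∃ l : List Ω, auxValid T P l ∧ F = (auxEdges l).toFinset := by
    intro F hF
    exact (hPFmem F).mp hF
  choose! rep hrep1 hrep2 using hrepex
  -- basic facts about reps
  have hreplen : ∀ F ∈ PFfin, 3 ≤ (rep F).length := fun F hF => (hrep1 F hF).2.1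
  have hrepcard : ∀ F ∈ PFfin, F.card = (rep F).length - 1 := by
    intro F hF
    conv_lhs => rw [hrep2 F hF]
    rw [List.toFinset_card_of_nodup (auxEdges_nodup (auxValid_nodup (hrep1 F hF))),
      auxEdges_length]
  -- the union graph
  set EP := PFfin.biUnion (fun F => F) with hEPdef
  set TP := SimpleGraph.fromEdgeSet (↑EP : Set (Sym2 Ω)) with hTPdef
  have hTPle : TP ≤ T := by
    intro a b hadj
    rw [hTPdef, SimpleGraph.fromEdgeSet_adj] at hadj
    obtain ⟨hmem, -⟩ := hadj
    rw [Finset.mem_coe, Finset.mem_biUnion] at hmem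
    obtain ⟨F, hF, heF⟩ := hmem
    have : s(a, b) ∈ auxEdges (rep F) := by
      rw [hrep2 F hF] at heF
      exact List.mem_toFinset.mp heF
    exact auxValid_edges_subset (hrep1 F hF) this
  have hcacTP : auxCacProp TP := auxCacProp_mono hTPle hT
  have hTPedge : TP.edgeSet = (↑EP : Set (Sym2 Ω)) := by
    rw [hTPdef, SimpleGraph.edgeSet_fromEdgeSet]
    ext e
    simp only [Set.mem_diff, Set.mem_setOf_eq]
    constructor
    · exact fun h => h.1
    · intro he
      refine ⟨he, ?_⟩
      intro hdiag
      rw [Finset.mem_coe, Finset.mem_biUnion] at he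
      obtain ⟨F, hF, heF⟩ := he
      have : e ∈ auxEdges (rep F) := by
        rw [hrep2 F hF] at heF
        exact List.mem_toFinset.mp heF
      have := auxValid_edges_subset (hrep1 F hF) this
      exact (SimpleGraph.not_isDiag_of_mem_edgeSet T this) hdiag
  have hrank := aux_rank_bound TP hcacTP
  rw [hTPedge, Set.ncard_coe_finset] at hrank
  -- edge count from below
  have hEcard : EP.card = ∑ F ∈ PFfin, F.card :=
    Finset.card_biUnion (fun F₁ h₁ F₂ h₂ hne =>
      auxPF_disj ((hPFmem F₁).mp h₁) ((hPFmem F₂).mp h₂) hne)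
  -- interior sets
  set IntF : Finset (Sym2 Ω) → Finset Ω := fun F => ((rep F).tail.dropLast).toFinset with hIntFdef
  have hIntFcard : ∀ F ∈ PFfin, (IntF F).card = (rep F).length - 2 := by
    intro F hF
    have hnd : ((rep F).tail.dropLast).Nodup :=
      ((auxValid_nodup (hrep1 F hF)).tail).sublist (List.dropLast_sublist _)
    rw [hIntFdef, List.toFinset_card_of_nodup hnd, List.length_dropLast, List.length_tail]
    omega
  set Int := PFfin.biUnion IntF with hIntdef
  have hIntcard : Int.card ≤ ∑ F ∈ PFfin, ((rep F).length - 2) := by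
    calc Int.card ≤ ∑ F ∈ PFfin, (IntF F).card := Finset.card_biUnion_le
    _ = ∑ F ∈ PFfin, ((rep F).length - 2) :=
      Finset.sum_congr rfl (fun F hF => hIntFcard F hF)
  have hElow : Int.card + PFfin.card ≤ EP.card := by
    rw [hEcard]
    calc Int.card + PFfin.card ≤ (∑ F ∈ PFfin, ((rep F).length - 2)) + PFfin.card := by omega
    _ = (∑ F ∈ PFfin, ((rep F).length - 2)) + ∑ _F ∈ PFfin, 1 := by
        rw [Finset.sum_const, smul_eq_mul, mul_one]
    _ = ∑ F ∈ PFfin, (((rep F).length - 2) + 1) := by rw [Finset.sum_add_distrib]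
    _ ≤ ∑ F ∈ PFfin, F.card := by
        refine Finset.sum_le_sum ?_
        intro F hF
        rw [hrepcard F hF]
        have := hreplen F hF
        omega
  -- the support
  set U := PFfin.biUnion (fun F => (rep F).toFinset) with hUdef
  have hUsub : U ⊆ Int ∪ Bfin := by
    intro x hx
    rw [hUdef, Finset.mem_biUnion] at hx
    obtain ⟨F, hF, hxF⟩ := hx
    rw [List.mem_toFinset, List.mem_iff_getElem] at hxF
    obtain ⟨n, hn, rfl⟩ := hxF
    by_cases hend : n = 0 ∨ n = (rep F).length - 1
    · refine Finset.mem_union_right _ (hBfin _ ?_)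
      exact (auxValid_big_iff (hrep1 F hF) hn).mpr hend
    · push_neg at hend
      refine Finset.mem_union_left _ ?_
      rw [hIntdef, Finset.mem_biUnion]
      refine ⟨F, hF, ?_⟩
      rw [hIntFdef, List.mem_toFinset, List.mem_iff_getElem]
      have hlen := hreplen F hF
      refine ⟨n - 1, ?_, ?_⟩
      · rw [List.length_dropLast, List.length_tail]
        omega
      · rw [List.getElem_dropLast, List.getElem_tail]
        exact aux_getElem_congr (by omega) _ _
  have hUcard : U.card ≤ Int.card + Bfin.card :=
    le_trans (Finset.card_le_card hUsub) (Finset.card_union_le _ _)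
  -- isolated vertices outside U
  have hiso : ∀ x, x ∉ U → ∀ y, ¬ TP.Adj x y := by
    intro x hx y hadj
    rw [hTPdef, SimpleGraph.fromEdgeSet_adj] at hadj
    obtain ⟨hmem, -⟩ := hadj
    rw [Finset.mem_coe, Finset.mem_biUnion] at hmem
    obtain ⟨F, hF, heF⟩ := hmem
    have hedge : s(x, y) ∈ auxEdges (rep F) := by
      rw [hrep2 F hF] at heF
      exact List.mem_toFinset.mp heF
    obtain ⟨i, hi, heq⟩ := auxEdges_mem.mp hedge
    apply hx
    rw [hUdef, Finset.mem_biUnion]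
    refine ⟨F, hF, ?_⟩
    rw [List.mem_toFinset]
    rw [Sym2.eq_iff] at heq
    rcases heq with ⟨h1, -⟩ | ⟨h2, -⟩
    · rw [h1]; exact List.getElem_mem _
    · rw [h2]; exact List.getElem_mem _
  have hu₀ : (rep F₀)[0]'(by have := hreplen F₀ hF₀; omega) ∈ U := by
    rw [hUdef, Finset.mem_biUnion]
    exact ⟨F₀, hF₀, List.mem_toFinset.mpr (List.getElem_mem _)⟩
  have hcc := aux_cc_count TP U hiso _ hu₀
  -- propagation along cable paths inside cycles
  have hstepR : ∀ (l : List Ω), auxValid T P l → ∀ (a : Ω) (c : TP.Walk a a), c.IsCycle →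
      ∀ (i : ℕ) (h2 : i + 2 < l.length),
      s(l[i]'(by omega), l[i+1]'(by omega)) ∈ c.edges →
      s(l[i+1]'(by omega), l[i+2]'h2) ∈ c.edges := by
    intro l hval a c hc i h2 hmem
    have hvsup : l[i+1]'(by omega) ∈ c.support := by
      have := SimpleGraph.Walk.snd_mem_support_of_mem_edges c hmem
      exact this
    obtain ⟨x, y, hxy, hex, hey⟩ := aux_two_edges hc hvsup
    have hnbrs : ∀ z, s(l[i+1]'(by omega), z) ∈ c.edges →
        (z = l[i]'(by omega) ∨ z = l[i+2]'h2) := by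
      intro z hz
      have hTadj : T.Adj (l[i+1]'(by omega)) z :=
        hTPle (SimpleGraph.Walk.adj_of_mem_edges c hz)
      rw [auxValid_nbr hval (by omega) (by omega)] at hTadj
      rcases hTadj with hcase | hcase
      · left
        rw [hcase]
        exact aux_getElem_congr (by omega) _ _
      · right
        exact hcase
    rcases hnbrs x hex with hx | hx
    · rcases hnbrs y hey with hy | hy
      · exact absurd (hy ▸ hx : x = y) hxy
      · rwa [hy] at hey
    · rwa [hx] at hex
  have hstepL : ∀ (l : List Ω), auxValid T P l → ∀ (a : Ω) (c : TP.Walk a a), c.IsCycle →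
      ∀ (i : ℕ) (h1 : 1 ≤ i) (h2 : i + 1 < l.length),
      s(l[i]'(by omega), l[i+1]'h2) ∈ c.edges →
      s(l[i-1]'(by omega), l[i]'(by omega)) ∈ c.edges := by
    intro l hval a c hc i h1 h2 hmem
    have hvsup : l[i]'(by omega) ∈ c.support :=
      SimpleGraph.Walk.fst_mem_support_of_mem_edges c hmem
    obtain ⟨x, y, hxy, hex, hey⟩ := aux_two_edges hc hvsup
    have hnbrs : ∀ z, s(l[i]'(by omega), z) ∈ c.edges →
        (z = l[i-1]'(by omega) ∨ z = l[i+1]'h2) := by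
      intro z hz
      have hTadj : T.Adj (l[i]'(by omega)) z :=
        hTPle (SimpleGraph.Walk.adj_of_mem_edges c hz)
      rw [auxValid_nbr hval h1 h2] at hTadj
      exact hTadj
    have hgoal : ∀ z, z = l[i-1]'(by omega) → s(l[i]'(by omega), z) ∈ c.edges →
        s(l[i-1]'(by omega), l[i]'(by omega)) ∈ c.edges := by
      intro z hz hmem2
      rw [hz] at hmem2
      rw [Sym2.eq_swap] at hmem2
      exact hmem2
    rcases hnbrs x hex with hx | hx
    · exact hgoal x hx hex
    · rcases hnbrs y hey with hy | hy
      · exact hgoal y hy hey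
      · exact absurd (hy ▸ hx : x = y) hxy
  have hprop : ∀ (l : List Ω), auxValid T P l → ∀ (a : Ω) (c : TP.Walk a a), c.IsCycle →
      ∀ (e : Sym2 Ω), e ∈ c.edges → e ∈ auxEdges l → ∀ e' ∈ auxEdges l, e' ∈ c.edges := by
    intro l hval a c hc e hce hel e' hel'
    obtain ⟨i₀, hi₀, rfl⟩ := auxEdges_mem.mp hel
    obtain ⟨j, hj, rfl⟩ := auxEdges_mem.mp hel'
    -- all edges to the right of i₀ are in c
    have hR : ∀ d : ℕ, ∀ (hd : i₀ + d + 1 < l.length),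
        s(l[i₀+d]'(by omega), l[i₀+d+1]'hd) ∈ c.edges := by
      intro d
      induction d with
      | zero => intro hd; exact hce
      | succ n ihn =>
        intro hd
        have := hstepR l hval a c hc (i₀ + n) (by omega) (ihn (by omega))
        exact this
    have hL : ∀ d : ℕ, d ≤ i₀ → ∀ (hd : i₀ - d + 1 < l.length),
        s(l[i₀-d]'(by omega), l[i₀-d+1]'hd) ∈ c.edges := by
      intro d
      induction d with
      | zero => intro hd0 hd; exact hce
      | succ n ihn =>
        intro hd0 hd
        have hprev := ihn (by omega) (by omega)
        have := hstepL l hval a c hc (i₀ - n) (by omega) (by omega) hprev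
        have heq1 : i₀ - n - 1 = i₀ - (n+1) := by omega
        rw [aux_getElem_congr heq1 _ (by omega),
          aux_getElem_congr (show i₀ - n = i₀ - (n+1) + 1 by omega) _ (by omega)] at this
        exact this
    by_cases hij : i₀ ≤ j
    · have := hR (j - i₀) (by omega)
      rw [aux_getElem_congr (show i₀ + (j - i₀) = j by omega) _ (by omega),
        aux_getElem_congr (show i₀ + (j - i₀) + 1 = j + 1 by omega) _ (by omega)] at this
      exact this
    · have := hL (i₀ - j) (by omega) (by omega)
      rw [aux_getElem_congr (show i₀ - (i₀ - j) = j by omega) _ (by omega),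
        aux_getElem_congr (show i₀ - (i₀ - j) + 1 = j + 1 by omega) _ (by omega)] at this
      exact this
  -- every cycle edge set contains at least two classes
  have h2Z : ∀ Z ∈ auxCycSets TP, 2 ≤ (PFfin.filter (fun F => F ⊆ Z)).card := by
    intro Z hZ
    obtain ⟨a, c, hc, rfl⟩ := hZ
    -- an edge of c
    have hcne : c.edges ≠ [] := by
      have h3 := hc.three_le_length
      intro hnil
      rw [← SimpleGraph.Walk.length_edges, hnil] at h3
      simp at h3
    obtain ⟨e, hce⟩ := List.exists_mem_of_ne_nil _ hcne
    have heEP : e ∈ EP := by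
      rw [← Finset.mem_coe, ← hTPedge]
      exact c.edges_subset_edgeSet hce
    rw [Finset.mem_biUnion] at heEP
    obtain ⟨F₁, hF₁, heF₁⟩ := heEP
    have hel₁ : e ∈ auxEdges (rep F₁) := by
      rw [hrep2 F₁ hF₁] at heF₁
      exact List.mem_toFinset.mp heF₁
    have hF₁Z : F₁ ⊆ c.edges.toFinset := by
      intro e' he'
      rw [List.mem_toFinset]
      refine hprop (rep F₁) (hrep1 F₁ hF₁) a c hc e hce hel₁ e' ?_
      rw [hrep2 F₁ hF₁] at he'
      exact List.mem_toFinset.mp he'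
    -- second class via the endpoint
    have hlen₁ := hreplen F₁ hF₁
    set l₁ := rep F₁ with hl₁def
    have he01 : s(l₁[0]'(by omega), l₁[1]'(by omega)) ∈ c.edges := by
      refine hprop l₁ (hrep1 F₁ hF₁) a c hc e hce hel₁ _ ?_
      exact auxEdges_mem.mpr ⟨0, by omega, rfl⟩
    have htsup : l₁[0]'(by omega) ∈ c.support :=
      SimpleGraph.Walk.fst_mem_support_of_mem_edges c he01
    obtain ⟨x, y, hxy, hex, hey⟩ := aux_two_edges hc htsup
    have hpick : ∃ z, z ≠ l₁[1]'(by omega) ∧ s(l₁[0]'(by omega), z) ∈ c.edges := by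
      by_cases hx1 : x = l₁[1]'(by omega)
      · exact ⟨y, by rw [← hx1]; exact fun h => hxy h.symm, hey⟩
      · exact ⟨x, hx1, hex⟩
    obtain ⟨z, hz1, hze⟩ := hpick
    have hzEP : s(l₁[0]'(by omega), z) ∈ EP := by
      rw [← Finset.mem_coe, ← hTPedge]
      exact c.edges_subset_edgeSet hze
    rw [Finset.mem_biUnion] at hzEP
    obtain ⟨F₂, hF₂, heF₂⟩ := hzEP
    have hel₂ : s(l₁[0]'(by omega), z) ∈ auxEdges (rep F₂) := by
      rw [hrep2 F₂ hF₂] at heF₂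
      exact List.mem_toFinset.mp heF₂
    have hF₂Z : F₂ ⊆ c.edges.toFinset := by
      intro e' he'
      rw [List.mem_toFinset]
      refine hprop (rep F₂) (hrep1 F₂ hF₂) a c hc _ hze hel₂ e' ?_
      rw [hrep2 F₂ hF₂] at he'
      exact List.mem_toFinset.mp he'
    have hF₁₂ : F₁ ≠ F₂ := by
      intro heq
      have : s(l₁[0]'(by omega), z) ∈ auxEdges l₁ := by
        rw [← hl₁def] at *
        have : s(l₁[0]'(by omega), z) ∈ F₁ := by
          exact Eq.subst (motive := fun S => s(l₁[0]'(by omega), z) ∈ S) heq.symm heF₂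
        exact List.mem_toFinset.mp
          (Eq.subst (motive := fun S => s(l₁[0]'(by omega), z) ∈ S) (hrep2 F₁ hF₁) this)
      obtain ⟨i, hi, heqi⟩ := auxEdges_mem.mp this
      rw [Sym2.eq_iff] at heqi
      rcases heqi with ⟨h1, h2⟩ | ⟨h1, h2⟩
      · have : (0 : ℕ) = i := aux_nodup_inj (auxValid_nodup (hrep1 F₁ hF₁)) _ _ h1
        apply hz1
        rw [h2]
        exact aux_getElem_congr (by omega) _ _
      · have : (0 : ℕ) = i + 1 := aux_nodup_inj (auxValid_nodup (hrep1 F₁ hF₁)) _ _ h1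
        omega
    exact Finset.one_lt_card.mpr
      ⟨F₁, Finset.mem_filter.mpr ⟨hF₁, hF₁Z⟩, F₂, Finset.mem_filter.mpr ⟨hF₂, hF₂Z⟩, hF₁₂⟩
  -- 2 * #cycles ≤ #paths
  have hcycle2 : 2 * (auxCycSets TP).ncard ≤ PFfin.card := by
    have himdisj : ∀ Z₁ ∈ auxCycSets TP, ∀ Z₂ ∈ auxCycSets TP, Z₁ ≠ Z₂ →
        Disjoint (PFfin.filter (fun F => F ⊆ Z₁)) (PFfin.filter (fun F => F ⊆ Z₂)) := by
      intro Z₁ h₁ Z₂ h₂ hne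
      rw [Finset.disjoint_left]
      intro F hFZ₁ hFZ₂
      rw [Finset.mem_filter] at hFZ₁ hFZ₂
      have hFne : F.Nonempty := by
        rw [← Finset.card_pos, hrepcard F hFZ₁.1]
        have := hreplen F hFZ₁.1
        omega
      obtain ⟨e, he⟩ := hFne
      have := Finset.disjoint_left.mp (auxCycSets_disj hcacTP h₁ h₂ hne)
        (hFZ₁.2 he) (hFZ₂.2 he)
      exact this
    have hinj : Set.InjOn (fun Z => PFfin.filter (fun F => F ⊆ Z)) (auxCycSets TP) := by
      intro Z₁ h₁ Z₂ h₂ heq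
      have heq' : PFfin.filter (fun F => F ⊆ Z₁) = PFfin.filter (fun F => F ⊆ Z₂) := heq
      by_contra hne
      have hdisj := himdisj Z₁ h₁ Z₂ h₂ hne
      rw [heq'] at hdisj
      have h2 := h2Z Z₂ h₂
      rw [Finset.disjoint_self_iff_empty] at hdisj
      rw [hdisj] at h2
      simp at h2
    have himcard : ((fun Z => PFfin.filter (fun F => F ⊆ Z)) '' (auxCycSets TP)).ncard =
        (auxCycSets TP).ncard := Set.ncard_image_of_injOn hinj
    have := aux_disj_card ((fun Z => PFfin.filter (fun F => F ⊆ Z)) '' (auxCycSets TP))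
      ((Set.toFinite _).image _) ?_ PFfin ?_ 2 ?_
    · rw [himcard] at this
      omega
    · rintro S₁ ⟨Z₁, h₁, rfl⟩ S₂ ⟨Z₂, h₂, rfl⟩ hne
      refine himdisj Z₁ h₁ Z₂ h₂ ?_
      intro hZeq
      exact hne (by rw [hZeq])
    · rintro S ⟨Z, hZ, rfl⟩
      exact Finset.filter_subset _ _
    · rintro S ⟨Z, hZ, rfl⟩
      exact h2Z Z hZ
  -- assemble
  have hUcargΩ : U.card ≤ Fintype.card Ω := Finset.card_le_univ U
  have hUcompl : Uᶜ.card = Fintype.card Ω - U.card := Finset.card_compl U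
  rw [hPFcard]
  omega

/-- Near-endpoint interior vertices of valid cable paths. -/
def auxC (T : SimpleGraph Ω) (P : Ω → Prop) : Set Ω :=
  {w | ∃ l : List Ω, auxValid T P l ∧
    ((∃ h : 1 < l.length, w = l[1]'h) ∨
     (∃ h : l.length - 2 < l.length, w = l[l.length - 2]'h))}

lemma aux_pair_positions {l m : List Ω} (hl : auxValid T P l) (hm : auxValid T P m)
    (heq : (auxEdges l).toFinset = (auxEdges m).toFinset) {w : Ω}
    (hw : (∃ h : 1 < l.length, w = l[1]'h) ∨
      (∃ h : l.length - 2 < l.length, w = l[l.length - 2]'h)) :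
    (∃ h : 1 < m.length, w = m[1]'h) ∨
      (∃ h : m.length - 2 < m.length, w = m[m.length - 2]'h) := by
  have hlen := hl.2.1
  have hmlen := hm.2.1
  have hshare : s(l[0]'(by omega), l[1]'(by omega)) ∈ auxEdges m := by
    have h1 : s(l[0]'(by omega), l[1]'(by omega)) ∈ auxEdges l :=
      auxEdges_mem.mpr ⟨0, by omega, rfl⟩
    have h2 := List.mem_toFinset.mpr h1
    rw [heq] at h2
    exact List.mem_toFinset.mp h2
  rcases aux_unique_edge hl hm (auxEdges_mem.mpr ⟨0, by omega, rfl⟩) hshare with rfl | hrev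
  · exact hw
  · subst hrev
    have hlr : m.reverse.length = m.length := List.length_reverse
    rcases hw with ⟨h1, rfl⟩ | ⟨h2, rfl⟩
    · right
      refine ⟨by omega, ?_⟩
      rw [List.getElem_reverse]
      exact aux_getElem_congr (by omega) _ _
    · left
      refine ⟨by omega, ?_⟩
      rw [List.getElem_reverse]
      exact aux_getElem_congr (by omega) _ _

lemma auxC_card (T : SimpleGraph Ω) (P : Ω → Prop) :
    (auxC T P).ncard ≤ 2 * (auxPF T P).ncard := by
  classical
  set PFfin := (Set.toFinite (auxPF T P)).toFinset with hPFdef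
  have hPFmem : ∀ F, F ∈ PFfin ↔ F ∈ auxPF T P := fun F => Set.Finite.mem_toFinset _
  have hPFcard : (auxPF T P).ncard = PFfin.card := Set.ncard_eq_toFinset_card _ _
  have hrepex : ∀ F : Finset (Sym2 Ω), F ∈ PFfin →
      ∃ l, auxValid T P l ∧ F = (auxEdges l).toFinset := fun F hF => (hPFmem F).mp hF
  choose! rep hrep1 hrep2 using hrepex
  set pairF : Finset (Sym2 Ω) → Finset Ω := fun F =>
    (((rep F).drop 1).take 1 ++ ((rep F).drop ((rep F).length - 2)).take 1).toFinset
    with hpairdef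
  have hpaircard : ∀ F, (pairF F).card ≤ 2 := by
    intro F
    calc (pairF F).card ≤ (((rep F).drop 1).take 1 ++
        ((rep F).drop ((rep F).length - 2)).take 1).length := List.toFinset_card_le _
    _ ≤ 2 := by
      rw [List.length_append, List.length_take, List.length_take]
      omega
  have hmem_pair : ∀ {x : Ω} {n : ℕ} (l : List Ω) (h : n < l.length),
      x = l[n]'h → x ∈ (l.drop n).take 1 := by
    intro x n l h hx
    subst hx
    refine List.mem_iff_getElem.mpr ⟨0, ?_, ?_⟩
    · simp only [List.length_take, List.length_drop]
      omega
    · rw [List.getElem_take, List.getElem_drop]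
      exact aux_getElem_congr (by omega) _ _
  have hsub : auxC T P ⊆ ↑(PFfin.biUnion pairF) := by
    intro w hw
    obtain ⟨l, hl, hcase⟩ := hw
    have hlen := hl.2.1
    have hFPF : (auxEdges l).toFinset ∈ PFfin := (hPFmem _).mpr ⟨l, hl, rfl⟩
    have hm := hrep1 _ hFPF
    have hmlen := hm.2.1
    have heq : (auxEdges l).toFinset = (auxEdges (rep ((auxEdges l).toFinset))).toFinset :=
      hrep2 _ hFPF
    have hpos := aux_pair_positions hl hm heq hcase
    rw [Finset.mem_coe, Finset.mem_biUnion]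
    refine ⟨(auxEdges l).toFinset, hFPF, ?_⟩
    rw [hpairdef, List.mem_toFinset, List.mem_append]
    rcases hpos with ⟨h1, hx⟩ | ⟨h2, hx⟩
    · exact Or.inl (hmem_pair _ _ hx)
    · exact Or.inr (hmem_pair _ _ hx)
  calc (auxC T P).ncard ≤ (↑(PFfin.biUnion pairF) : Set Ω).ncard :=
    Set.ncard_le_ncard hsub (Set.toFinite _)
  _ = (PFfin.biUnion pairF).card := Set.ncard_coe_finset _
  _ ≤ ∑ F ∈ PFfin, (pairF F).card := Finset.card_biUnion_le
  _ ≤ ∑ _F ∈ PFfin, 2 := Finset.sum_le_sum (fun F _ => hpaircard F)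
  _ = PFfin.card * 2 := by rw [Finset.sum_const, smul_eq_mul]
  _ = 2 * (auxPF T P).ncard := by rw [hPFcard]; ring

lemma auxC_nbr_two {w : Ω} (hw : w ∈ auxC T P) :
    ∃ x y : Ω, ∀ z, T.Adj w z → (z = x ∨ z = y) := by
  obtain ⟨l, hl, hcase⟩ := hw
  have hlen := hl.2.1
  rcases hcase with ⟨h1, rfl⟩ | ⟨h2, rfl⟩
  · refine ⟨l[1-1]'(by omega), l[1+1]'(by omega), fun z hz => ?_⟩
    exact (auxValid_nbr hl (i := 1) (by omega) (by omega) z).mp hz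
  · refine ⟨l[l.length-2-1]'(by omega), l[l.length-2+1]'(by omega), fun z hz => ?_⟩
    exact (auxValid_nbr hl (i := l.length - 2) (by omega) (by omega) z).mp hz

lemma auxC_not_big {w : Ω} (hl : w ∈ auxC T P) : ¬ P w := by
  obtain ⟨l, hval, hcase⟩ := hl
  have hlen := hval.2.1
  rcases hcase with ⟨h1, rfl⟩ | ⟨h2, rfl⟩
  · exact hval.2.2.2.2 1 (by omega) (by omega) (by omega)
  · exact hval.2.2.2.2 (l.length - 2) (by omega) (by omega) (by omega)

end Aux

/-- For a 2-connected graph `G` that is `k`-contractible to a cactus `T` with witness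
structure given by `ψ`, a uniformly random 3-colouring of `V(G)` is compatible with the
witness structure with probability at least `1 / 3 ^ (6 k)`. -/
theorem stmt6 {V : Type} {W : Type} [Fintype V] [DecidableEq V] [Fintype W]
    (G : SimpleGraph V) (T : SimpleGraph W) (k : ℕ) (ψ : V → W)
    (hG : TwoConnected G) (hT : IsCactus T) (hψ : IsContraction G T ψ)
    (hk : Fintype.card V ≤ Fintype.card W + k) :
    Fintype.card (V → Fin 3) ≤
      3 ^ (6 * k) * {f : V → Fin 3 | Compatible T ψ f}.ncard := by
  classical
  letI : DecidableEq W := Classical.decEq W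
  letI : DecidableRel T.Adj := Classical.decRel _
  obtain ⟨hψsurj, hψconn, hψadj⟩ := hψ
  set P : W → Prop := BigWitness ψ with hPdef
  have hcac : auxCacProp T := hT.2
  -- a section of ψ
  choose r hr using hψsurj
  have hrinj : Function.Injective r := fun a b hab => by rw [← hr a, ← hr b, hab]
  -- big witness sets
  set Bfin : Finset W := Finset.univ.filter (fun t => P t) with hBdef
  have hBmem : ∀ t, t ∈ Bfin ↔ P t := by
    intro t
    simp [hBdef]
  -- |W| + b ≤ |V|
  have hWb : Fintype.card W + Bfin.card ≤ Fintype.card V := by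
    have hcardsum : Fintype.card V =
        ∑ w : W, (Finset.univ.filter (fun v => ψ v = w)).card := by
      rw [← Finset.card_univ, Finset.card_eq_sum_card_fiberwise
        (fun v _ => Finset.mem_univ (ψ v))]
    have hpoint : ∀ w : W,
        1 + (if P w then 1 else 0) ≤ (Finset.univ.filter (fun v => ψ v = w)).card := by
      intro w
      by_cases hPw : P w
      · rw [if_pos hPw]
        obtain ⟨a, b, hab, ha, hb⟩ := hPw
        exact Finset.one_lt_card.mpr
          ⟨a, by simp [ha], b, by simp [hb], hab⟩
      · rw [if_neg hPw]
        have : r w ∈ Finset.univ.filter (fun v => ψ v = w) := by simp [hr w]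
        have := Finset.card_pos.mpr ⟨r w, this⟩
        omega
    have hsum : ∑ w : W, (1 + (if P w then 1 else 0)) ≤
        ∑ w : W, (Finset.univ.filter (fun v => ψ v = w)).card :=
      Finset.sum_le_sum (fun w _ => hpoint w)
    have hsplit : ∑ w : W, (1 + (if P w then 1 else 0)) =
        Fintype.card W + Bfin.card := by
      rw [Finset.sum_add_distrib]
      congr 1
      · simp
      · rw [hBdef, Finset.card_filter]
    omega
  -- path and C bounds
  have hpc := aux_path_count T P hcac Bfin (fun w hw => (hBmem w).mpr hw)
  have hccb := auxC_card T P
  set Cfin : Finset W := (Set.toFinite (auxC T P)).toFinset with hCdef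
  have hCmem : ∀ w, w ∈ Cfin ↔ w ∈ auxC T P := fun w => Set.Finite.mem_toFinset _
  have hCeq : Cfin.card = (auxC T P).ncard :=
    (Set.ncard_eq_toFinset_card _ (Set.toFinite (auxC T P))).symm
  have hCcard : Cfin.card ≤ 4 * Bfin.card := by omega
  -- the recoloured set
  set S : Finset V := ((Finset.univ \ Finset.univ.image r) ∪ Bfin.image r) ∪ Cfin.image r
    with hSdef
  have hScard : S.card ≤ 6 * k := by
    have h1 : (Finset.univ \ Finset.univ.image r).card =
        Fintype.card V - Fintype.card W := by
      rw [Finset.card_sdiff_of_subset (Finset.subset_univ _), Finset.card_univ,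
        Finset.card_image_of_injective _ hrinj, Finset.card_univ]
    have h2 : (Bfin.image r).card ≤ Bfin.card := Finset.card_image_le
    have h3 : (Cfin.image r).card ≤ Cfin.card := Finset.card_image_le
    have h4 : S.card ≤ ((Finset.univ \ Finset.univ.image r) ∪ Bfin.image r).card
        + (Cfin.image r).card := by
      rw [hSdef]
      exact Finset.card_union_le _ _
    have h5 := Finset.card_union_le (Finset.univ \ Finset.univ.image r) (Bfin.image r)
    omega
  -- colouring of the big sets
  obtain ⟨κ, hκ⟩ := aux_color T hcac Bfin
  -- colour choice for near-endpoint vertices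
  have hcwex : ∀ w ∈ auxC T P, ∃ c : Fin 3, ∀ z, T.Adj w z → c ≠ κ z := by
    intro w hw
    obtain ⟨x, y, hxy⟩ := auxC_nbr_two hw
    have hne : (({κ x, κ y} : Finset (Fin 3))ᶜ).Nonempty := by
      rw [← Finset.card_pos, Finset.card_compl]
      have h2 : ({κ x, κ y} : Finset (Fin 3)).card ≤ 2 :=
        le_trans (Finset.card_insert_le _ _) (by simp)
      simp only [Fintype.card_fin]
      omega
    obtain ⟨c, hc⟩ := hne
    rw [Finset.mem_compl] at hc
    refine ⟨c, fun z hz => ?_⟩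
    rcases hxy z hz with rfl | rfl
    · intro he
      exact hc (by rw [he]; exact Finset.mem_insert_self _ _)
    · intro he
      exact hc (by rw [he]; exact Finset.mem_insert_of_mem (Finset.mem_singleton_self _))
  choose! cw hcw using hcwex
  -- the extension property
  have hext : ∀ g : V → Fin 3, ∃ f : V → Fin 3, Compatible T ψ f ∧ ∀ v ∉ S, f v = g v := by
    intro g
    set φ : W → Fin 3 := fun w =>
      if P w then κ w else if w ∈ auxC T P then cw w else g (r w) with hφdef
    refine ⟨φ ∘ ψ, ⟨?_, ?_, ?_⟩, ?_⟩
    · intro x y hxy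
      simp only [Function.comp_apply, hxy]
    · intro t t' hbt hbt' hadj x y hx hy
      simp only [Function.comp_apply, hx, hy, hφdef]
      rw [if_pos hbt, if_pos hbt']
      exact hκ t ((hBmem t).mpr hbt) t' ((hBmem t').mpr hbt') hadj
    · intro l hcable hlen hbig0 hbigL hint
      have hval : auxValid T P l := by
        refine ⟨hcable, hlen, ?_, ?_, ?_⟩
        · intro h
          simpa [List.get_eq_getElem] using hbig0
        · intro h
          simpa [List.get_eq_getElem] using hbigL
        · intro i h h1 h2
          simpa [List.get_eq_getElem] using hint i h h1 h2
      constructor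
      · intro x y hx hy
        have hw1C : (l.get ⟨1, by omega⟩) ∈ auxC T P :=
          ⟨l, hval, Or.inl ⟨by omega, by simp [List.get_eq_getElem]⟩⟩
        have hw1nb : ¬ P (l.get ⟨1, by omega⟩) := auxC_not_big hw1C
        have hadj : T.Adj (l.get ⟨1, by omega⟩) (l.get ⟨0, by omega⟩) := by
          have := auxValid_adj hval (i := 0) (by omega)
          simpa [List.get_eq_getElem] using this.symm
        simp only [Function.comp_apply, hx, hy, hφdef]
        rw [if_pos (show P (l.get ⟨0, by omega⟩) from hbig0), if_neg hw1nb, if_pos hw1C]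
        exact fun he => hcw _ hw1C _ hadj he.symm
      · intro x y hx hy
        have hw2C : (l.get ⟨l.length - 2, by omega⟩) ∈ auxC T P :=
          ⟨l, hval, Or.inr ⟨by omega, by simp [List.get_eq_getElem]⟩⟩
        have hw2nb : ¬ P (l.get ⟨l.length - 2, by omega⟩) := auxC_not_big hw2C
        have hadj : T.Adj (l.get ⟨l.length - 2, by omega⟩) (l.get ⟨l.length - 1, by omega⟩) := by
          have := auxValid_adj hval (i := l.length - 2) (by omega)
          simp only [List.get_eq_getElem]
          rw [aux_getElem_congr (show l.length - 1 = l.length - 2 + 1 by omega) _ (by omega)]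
          exact this
        simp only [Function.comp_apply, hx, hy, hφdef]
        rw [if_pos (show P (l.get ⟨l.length - 1, by omega⟩) from hbigL), if_neg hw2nb,
          if_pos hw2C]
        exact fun he => hcw _ hw2C _ hadj he.symm
    · intro v hv
      have hvr : v ∈ Finset.univ.image r := by
        by_contra hvc
        exact hv (by
          rw [hSdef]
          exact Finset.mem_union_left _ (Finset.mem_union_left _
            (Finset.mem_sdiff.mpr ⟨Finset.mem_univ v, hvc⟩)))
      obtain ⟨w, -, hw⟩ := Finset.mem_image.mp hvr
      have hψv : ψ v = w := by rw [← hw, hr w]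
      have hvrψ : r (ψ v) = v := by rw [hψv, hw]
      have hnB : ¬ P (ψ v) := by
        intro hPv
        apply hv
        rw [hSdef]
        refine Finset.mem_union_left _ (Finset.mem_union_right _ ?_)
        exact Finset.mem_image.mpr ⟨ψ v, (hBmem _).mpr hPv, hvrψ⟩
      have hnC : ψ v ∉ auxC T P := by
        intro hCv
        apply hv
        rw [hSdef]
        refine Finset.mem_union_right _ ?_
        exact Finset.mem_image.mpr ⟨ψ v, (hCmem _).mpr hCv, hvrψ⟩
      simp only [Function.comp_apply, hφdef]
      rw [if_neg hnB, if_neg hnC, hvrψ]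
  -- final counting
  choose Fix hFix1 hFix2 using hext
  have hinj : Function.Injective (fun g : V → Fin 3 =>
      ((⟨Fix g, hFix1 g⟩ : {f : V → Fin 3 | Compatible T ψ f}),
        (fun v : ↥S => g v.1))) := by
    intro g₁ g₂ h12
    rw [Prod.mk.injEq, Subtype.mk.injEq] at h12
    obtain ⟨h1, h2⟩ := h12
    funext v
    by_cases hvS : v ∈ S
    · exact congrFun h2 ⟨v, hvS⟩
    · rw [← hFix2 g₁ v hvS, ← hFix2 g₂ v hvS, h1]
  have hcount := Nat.card_le_card_of_injective _ hinj
  rw [Nat.card_prod, Nat.card_eq_fintype_card (α := V → Fin 3),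
    Nat.card_eq_fintype_card (α := (↥S → Fin 3))] at hcount
  have hCompcard : Nat.card {f : V → Fin 3 | Compatible T ψ f} =
      {f : V → Fin 3 | Compatible T ψ f}.ncard := (Nat.card_coe_set_eq _)
  have hfun : Fintype.card (↥S → Fin 3) = 3 ^ S.card := by
    rw [Fintype.card_fun, Fintype.card_fin, Fintype.card_coe]
  rw [hCompcard, hfun] at hcount
  have hpow : (3 : ℕ) ^ S.card ≤ 3 ^ (6 * k) :=
    Nat.pow_le_pow_right (by norm_num) hScard
  calc Fintype.card (V → Fin 3) ≤
      {f : V → Fin 3 | Compatible T ψ f}.ncard * 3 ^ S.card := hcount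
  _ ≤ {f : V → Fin 3 | Compatible T ψ f}.ncard * 3 ^ (6 * k) :=
      Nat.mul_le_mul_left _ hpow
  _ = 3 ^ (6 * k) * {f : V → Fin 3 | Compatible T ψ f}.ncard := Nat.mul_comm _ _
end

section
/- If G is a 2-connected graph whose vertex set can be partitioned into the vertex sets of two cable paths P and Q of G, then G has a Hamiltonian cycle. -/
open SimpleGraph

universe u v

section Helpers

variable {V : Type}

def walkOfChain (G : SimpleGraph V) :
    (l : List V) → l.Chain' G.Adj → (hne : l ≠ []) → G.Walk (l.head hne) (l.getLast hne)
  | [x], _, _ => SimpleGraph.Walk.nil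
  | x :: y :: t, h, _ =>
      (SimpleGraph.Walk.cons (List.isChain_cons_cons.mp h).1
        ((walkOfChain G (y :: t) (id (α := (y :: t).Chain' G.Adj) (List.isChain_cons_cons.mp h).2) (by simp)).copy
          List.head_cons rfl)).copy List.head_cons.symm
        (List.getLast_cons (by simp)).symm

theorem support_walkOfChain (G : SimpleGraph V) :
    ∀ (l : List V) (hc : l.Chain' G.Adj) (hne : l ≠ []),
      (walkOfChain G l hc hne).support = l
  | [x], _, _ => by simp [walkOfChain]
  | x :: y :: t, h, _ => by
      rw [walkOfChain]
      rw [Walk.support_copy, Walk.support_cons, Walk.support_copy]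
      rw [support_walkOfChain]

theorem ham_of_list [DecidableEq V] (G : SimpleGraph V) (l : List V) (hc : l.Chain' G.Adj)
    (hne : l ≠ []) (hnd : l.Nodup) (hlen : 3 ≤ l.length)
    (hclose : G.Adj (l.getLast hne) (l.head hne))
    (hall : ∀ x : V, x ∈ l) :
    ∃ (a : V) (c : G.Walk a a), c.IsHamiltonianCycle := by
  refine ⟨_, Walk.cons hclose (walkOfChain G l hc hne), ?_⟩
  rw [Walk.isHamiltonianCycle_iff_isCycle_and_support_count_tail_eq_one]
  constructor
  · rw [Walk.cons_isCycle_iff]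
    refine ⟨by rw [Walk.isPath_def, support_walkOfChain]; exact hnd, ?_⟩
    intro hmem
    match l, hnd with
    | x :: y :: t, hnd =>
      have ht : t ≠ [] := by
        intro h; subst h; simp at hlen
      have hgl : (x :: y :: t).getLast hne = t.getLast ht :=
        (List.getLast_cons (by simp)).trans (List.getLast_cons ht)
      simp only [walkOfChain, Walk.edges_copy, Walk.edges_cons, List.mem_cons] at hmem
      rcases hmem with h1 | h2
      · rw [Sym2.eq_iff] at h1
        simp only [List.head_cons] at h1
        have hglt : t.getLast ht ∈ t := List.getLast_mem ht
        simp only [List.nodup_cons] at hnd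
        rcases h1 with ⟨hl1, hl2⟩ | ⟨hl1, hl2⟩
        · exact hnd.1 (hl2 ▸ (List.mem_cons_self : y ∈ y :: t))
        · rw [hgl] at hl1
          exact hnd.2.1 (hl1 ▸ hglt)
      · have := Walk.fst_mem_support_of_mem_edges _ (Sym2.eq_swap ▸ h2)
        rw [support_walkOfChain] at this
        simp only [List.nodup_cons] at hnd
        exact hnd.1 (by simpa using this)
  · intro a
    simp only [Walk.support_cons, List.tail_cons, support_walkOfChain]
    exact List.count_eq_one_of_mem hnd (hall a)

theorem cross_endpoint (G : SimpleGraph V) (P : List V) (hP : IsCablePath G P)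
    (x y : V) (hx : x ∈ P) (hy : y ∉ P) (hadj : G.Adj x y) :
    x = P.head hP.1 ∨ x = P.getLast hP.1 := by
  obtain ⟨⟨i, hi⟩, rfl⟩ := List.mem_iff_get.mp hx
  rcases Nat.eq_zero_or_pos i with h0 | h1
  · left; subst h0; simp [List.head_eq_getElem_zero]
  rcases eq_or_lt_of_le (Nat.succ_le_of_lt hi) with he | hlt
  · right
    rw [List.getLast_eq_getElem]
    simp only [List.get_eq_getElem]
    congr 1
    omega
  · exfalso
    have := (hP.2.2.2 i hlt h1 y).mp hadj
    rcases this with h | h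
    · exact hy (h ▸ List.get_mem P _)
    · exact hy (h ▸ List.get_mem P _)

theorem exists_cross (G : SimpleGraph V)
    (hcon : ∀ z : V, (G.induce ({z}ᶜ : Set V)).Connected)
    (P Q : List V) (hpart : ∀ x : V, x ∈ P ↔ x ∉ Q) (z : V)
    (b : V) (hb : b ∈ P) (hbz : b ≠ z) (a : V) (ha : a ∈ Q) (haz : a ≠ z) :
    ∃ x y : V, x ∈ P ∧ y ∈ Q ∧ G.Adj x y ∧ x ≠ z ∧ y ≠ z := by
  have hmem : ∀ u : V, u ≠ z → u ∈ ({z}ᶜ : Set V) := fun u hu => by simpa using hu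
  obtain ⟨w⟩ := (hcon z).preconnected ⟨a, hmem a haz⟩ ⟨b, hmem b hbz⟩
  obtain ⟨d, _, hdS, hdnS⟩ := w.exists_boundary_dart {v : ({z}ᶜ : Set V) | v.val ∈ Q}
    (by simpa using ha) (by simpa using (hpart b).mp hb)
  refine ⟨d.snd.val, d.fst.val, ?_, hdS, ?_, ?_, ?_⟩
  · exact (hpart _).mpr hdnS
  · exact (d.adj.symm : G.Adj d.snd.val d.fst.val)
  · exact fun h => d.snd.2 (by simp [h])
  · exact fun h => d.fst.2 (by simp [h])

theorem head_ne_getLast (l : List V) (hnd : l.Nodup) (h2 : 2 ≤ l.length) (hne : l ≠ []) :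
    l.head hne ≠ l.getLast hne := by
  match l, hnd, h2 with
  | x :: y :: t, hnd, _ =>
    simp only [List.head_cons]
    have hmem : (x :: y :: t).getLast (by simp) ∈ y :: t :=
      (List.getLast_cons (by simp) : (x :: y :: t).getLast _ = _) ▸ List.getLast_mem _
    intro h
    rw [← h] at hmem
    exact (List.nodup_cons.mp hnd).1 hmem

theorem shapeI [DecidableEq V] (G : SimpleGraph V) (P Q : List V)
    (hPne : P ≠ []) (hQne : Q ≠ [])
    (hcP : P.Chain' G.Adj) (hcQ : Q.Chain' G.Adj)
    (hndP : P.Nodup) (hndQ : Q.Nodup)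
    (hdisj : ∀ x ∈ P, x ∉ Q)
    (hall : ∀ x : V, x ∈ P ∨ x ∈ Q)
    (hlen : 3 ≤ P.length + Q.length)
    (h1 : G.Adj (P.getLast hPne) (Q.head hQne))
    (h2 : G.Adj (Q.getLast hQne) (P.head hPne)) :
    ∃ (a : V) (c : G.Walk a a), c.IsHamiltonianCycle := by
  have hne : P ++ Q ≠ [] := by simp [hPne]
  apply ham_of_list G (P ++ Q) ?_ hne ?_ ?_ ?_ ?_
  · show List.IsChain G.Adj (P ++ Q)
    rw [List.isChain_append]
    refine ⟨hcP, hcQ, fun x hx y hy => ?_⟩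
    rw [List.getLast?_eq_getLast hPne, Option.mem_some_iff] at hx
    rw [List.head?_eq_head hQne, Option.mem_some_iff] at hy
    rw [← hx, ← hy]
    exact h1
  · exact List.nodup_append'.mpr ⟨hndP, hndQ, hdisj⟩
  · simpa using hlen
  · rw [List.getLast_append_of_ne_nil _ hQne, List.head_append_left hPne]
    exact h2
  · intro x; rw [List.mem_append]; exact hall x

theorem shapeII [DecidableEq V] (G : SimpleGraph V) (P Q : List V)
    (hPne : P ≠ []) (hQne : Q ≠ [])
    (hcP : P.Chain' G.Adj) (hcQ : Q.Chain' G.Adj)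
    (hndP : P.Nodup) (hndQ : Q.Nodup)
    (hdisj : ∀ x ∈ P, x ∉ Q)
    (hall : ∀ x : V, x ∈ P ∨ x ∈ Q)
    (hlen : 3 ≤ P.length + Q.length)
    (h1 : G.Adj (P.getLast hPne) (Q.getLast hQne))
    (h2 : G.Adj (Q.head hQne) (P.head hPne)) :
    ∃ (a : V) (c : G.Walk a a), c.IsHamiltonianCycle := by
  have hQne2 : Q.reverse ≠ [] := by simpa using hQne
  apply shapeI G P Q.reverse hPne hQne2 hcP ?_ hndP (by simpa using hndQ)
    (by simpa using hdisj) (by simpa using hall) (by simpa using hlen) ?_ ?_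
  · exact List.isChain_reverse.mpr (hcQ.imp fun a b h => h.symm)
  · rwa [List.head_reverse]
  · rwa [List.getLast_reverse]

end Helpers

/-- A 2-connected graph whose vertex set is partitioned into two cable paths has a
Hamiltonian cycle. -/
theorem stmt8 {V : Type} [Fintype V] [DecidableEq V] (G : SimpleGraph V)
    (hG : TwoConnected G) (P Q : List V)
    (hP : IsCablePath G P) (hQ : IsCablePath G Q)
    (hpart : ∀ x : V, x ∈ P ↔ x ∉ Q) :
    ∃ (a : V) (c : G.Walk a a), c.IsHamiltonianCycle := by
  obtain ⟨hconn, hcard, hcon⟩ := hG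
  have hPne : P ≠ [] := hP.1
  have hQne : Q ≠ [] := hQ.1
  have hndP : P.Nodup := hP.2.1
  have hndQ : Q.Nodup := hQ.2.1
  have hcP : P.Chain' G.Adj := hP.2.2.1
  have hcQ : Q.Chain' G.Adj := hQ.2.2.1
  have hdisj : ∀ x ∈ P, x ∉ Q := fun x hx => (hpart x).mp hx
  have hall : ∀ x : V, x ∈ P ∨ x ∈ Q := fun x => by
    by_cases h : x ∈ Q
    · exact Or.inr h
    · exact Or.inl ((hpart x).mpr h)
  have hQP : ∀ y ∈ Q, y ∉ P := fun y hy hyP => hdisj y hyP hy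
  have hlen : 3 ≤ P.length + Q.length := by
    have h1 : Nat.card V = Fintype.card V := Nat.card_eq_fintype_card
    have h2 : (Finset.univ : Finset V) ⊆ (P ++ Q).toFinset := fun x _ => by
      simpa using hall x
    have h3 := Finset.card_le_card h2
    have h4 := List.toFinset_card_le (P ++ Q)
    simp only [Finset.card_univ] at h3
    rw [List.length_append] at h4
    omega
  have cross : ∀ z : V, (∃ p ∈ P, p ≠ z) → (∃ q ∈ Q, q ≠ z) →
      ∃ x y : V, (x = P.head hPne ∨ x = P.getLast hPne) ∧
        (y = Q.head hQne ∨ y = Q.getLast hQne) ∧ G.Adj x y ∧ x ≠ z ∧ y ≠ z := by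
    rintro z ⟨p, hp, hpz⟩ ⟨q, hq, hqz⟩
    obtain ⟨x, y, hxP, hyQ, hadj, hxz, hyz⟩ :=
      exists_cross G hcon P Q hpart z p hp hpz q hq hqz
    exact ⟨x, y, cross_endpoint G P hP x y hxP (hQP y hyQ) hadj,
      cross_endpoint G Q hQ y x hyQ (hdisj x hxP) hadj.symm, hadj, hxz, hyz⟩
  rcases Nat.lt_or_ge P.length 2 with hm | hm
  · -- P is a single vertex
    have hm1 : P.length = 1 := by
      have := List.length_pos_iff.mpr hPne; omega
    obtain ⟨w, rfl⟩ := List.length_eq_one_iff.mp hm1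
    have hQ2 : 2 ≤ Q.length := by omega
    have hbb' : Q.head hQne ≠ Q.getLast hQne := head_ne_getLast Q hndQ hQ2 hQne
    have hwQ : w ∉ Q := hdisj w (by simp)
    have hwb : w ≠ Q.head hQne := fun h => hwQ (h ▸ List.head_mem hQne)
    have hwb' : w ≠ Q.getLast hQne := fun h => hwQ (h ▸ List.getLast_mem hQne)
    obtain ⟨x1, y1, hx1, hy1, hadj1, hx1z, hy1z⟩ := cross (Q.getLast hQne)
      ⟨w, by simp, hwb'⟩ ⟨Q.head hQne, List.head_mem hQne, hbb'⟩
    obtain ⟨x2, y2, hx2, hy2, hadj2, hx2z, hy2z⟩ := cross (Q.head hQne)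
      ⟨w, by simp, hwb⟩ ⟨Q.getLast hQne, List.getLast_mem hQne, hbb'.symm⟩
    have hx1w : x1 = w := by rcases hx1 with h | h <;> simpa using h
    have hx2w : x2 = w := by rcases hx2 with h | h <;> simpa using h
    have h1 : G.Adj w (Q.head hQne) := by
      have := hy1.resolve_right hy1z ▸ hx1w ▸ hadj1
      exact this
    have h2 : G.Adj w (Q.getLast hQne) := by
      have := hy2.resolve_left hy2z ▸ hx2w ▸ hadj2
      exact this
    apply shapeI G [w] Q (by simp) hQne (List.isChain_singleton w) hcQ hndP hndQ hdisj hall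
      (by simpa using hlen) (by simpa using h1) (by simpa using h2.symm)
  rcases Nat.lt_or_ge Q.length 2 with hn | hn
  · -- Q is a single vertex
    have hn1 : Q.length = 1 := by
      have := List.length_pos_iff.mpr hQne; omega
    obtain ⟨w, rfl⟩ := List.length_eq_one_iff.mp hn1
    have haa' : P.head hPne ≠ P.getLast hPne := head_ne_getLast P hndP hm hPne
    have hwP : w ∉ P := hQP w (by simp)
    have hwa : w ≠ P.head hPne := fun h => hwP (h ▸ List.head_mem hPne)
    have hwa' : w ≠ P.getLast hPne := fun h => hwP (h ▸ List.getLast_mem hPne)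
    obtain ⟨x1, y1, hx1, hy1, hadj1, hx1z, hy1z⟩ := cross (P.getLast hPne)
      ⟨P.head hPne, List.head_mem hPne, haa'⟩ ⟨w, by simp, hwa'⟩
    obtain ⟨x2, y2, hx2, hy2, hadj2, hx2z, hy2z⟩ := cross (P.head hPne)
      ⟨P.getLast hPne, List.getLast_mem hPne, haa'.symm⟩ ⟨w, by simp, hwa⟩
    have hy1w : y1 = w := by rcases hy1 with h | h <;> simpa using h
    have hy2w : y2 = w := by rcases hy2 with h | h <;> simpa using h
    have h1 : G.Adj (P.head hPne) w := by
      have := hx1.resolve_right hx1z ▸ hy1w ▸ hadj1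
      exact this
    have h2 : G.Adj (P.getLast hPne) w := by
      have := hx2.resolve_left hx2z ▸ hy2w ▸ hadj2
      exact this
    apply shapeI G P [w] hPne (by simp) hcP (List.isChain_singleton w) hndP hndQ hdisj hall
      (by simpa using hlen) (by simpa using h2) (by simpa using h1.symm)
  · -- both paths have at least two vertices
    have haa' : P.head hPne ≠ P.getLast hPne := head_ne_getLast P hndP hm hPne
    have hbb' : Q.head hQne ≠ Q.getLast hQne := head_ne_getLast Q hndQ hn hQne
    have hPQne : ∀ x ∈ P, ∀ y ∈ Q, x ≠ y := fun x hx y hy h => hdisj x hx (h ▸ hy)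
    have hA : G.Adj (P.head hPne) (Q.head hQne) ∨ G.Adj (P.head hPne) (Q.getLast hQne) := by
      obtain ⟨x, y, hx, hy, hadj, hxz, hyz⟩ := cross (P.getLast hPne)
        ⟨P.head hPne, List.head_mem hPne, haa'⟩
        ⟨Q.head hQne, List.head_mem hQne,
          (hPQne _ (List.getLast_mem hPne) _ (List.head_mem hQne)).symm⟩
      rcases hy with rfl | rfl
      · exact Or.inl ((hx.resolve_right hxz) ▸ hadj)
      · exact Or.inr ((hx.resolve_right hxz) ▸ hadj)
    have hA' : G.Adj (P.getLast hPne) (Q.head hQne) ∨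
        G.Adj (P.getLast hPne) (Q.getLast hQne) := by
      obtain ⟨x, y, hx, hy, hadj, hxz, hyz⟩ := cross (P.head hPne)
        ⟨P.getLast hPne, List.getLast_mem hPne, haa'.symm⟩
        ⟨Q.head hQne, List.head_mem hQne,
          (hPQne _ (List.head_mem hPne) _ (List.head_mem hQne)).symm⟩
      rcases hy with rfl | rfl
      · exact Or.inl ((hx.resolve_left hxz) ▸ hadj)
      · exact Or.inr ((hx.resolve_left hxz) ▸ hadj)
    have hB : G.Adj (P.head hPne) (Q.head hQne) ∨ G.Adj (P.getLast hPne) (Q.head hQne) := by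
      obtain ⟨x, y, hx, hy, hadj, hxz, hyz⟩ := cross (Q.getLast hQne)
        ⟨P.head hPne, List.head_mem hPne,
          hPQne _ (List.head_mem hPne) _ (List.getLast_mem hQne)⟩
        ⟨Q.head hQne, List.head_mem hQne, hbb'⟩
      have hyb : y = Q.head hQne := hy.resolve_right hyz
      rcases hx with rfl | rfl
      · exact Or.inl (hyb ▸ hadj)
      · exact Or.inr (hyb ▸ hadj)
    have hB' : G.Adj (P.head hPne) (Q.getLast hQne) ∨
        G.Adj (P.getLast hPne) (Q.getLast hQne) := by
      obtain ⟨x, y, hx, hy, hadj, hxz, hyz⟩ := cross (Q.head hQne)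
        ⟨P.head hPne, List.head_mem hPne,
          hPQne _ (List.head_mem hPne) _ (List.head_mem hQne)⟩
        ⟨Q.getLast hQne, List.getLast_mem hQne, hbb'.symm⟩
      have hyb : y = Q.getLast hQne := hy.resolve_left hyz
      rcases hx with rfl | rfl
      · exact Or.inl (hyb ▸ hadj)
      · exact Or.inr (hyb ▸ hadj)
    rcases hA with h1 | h1
    · rcases hB' with h2 | h2
      · rcases hA' with h3 | h3
        · exact shapeI G P Q hPne hQne hcP hcQ hndP hndQ hdisj hall hlen h3 h2.symm
        · exact shapeII G P Q hPne hQne hcP hcQ hndP hndQ hdisj hall hlen h3 h1.symm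
      · exact shapeII G P Q hPne hQne hcP hcQ hndP hndQ hdisj hall hlen h2 h1.symm
    · rcases hA' with h3 | h3
      · exact shapeI G P Q hPne hQne hcP hcQ hndP hndQ hdisj hall hlen h3 h1.symm
      · rcases hB with h4 | h4
        · exact shapeII G P Q hPne hQne hcP hcQ hndP hndQ hdisj hall hlen h3 h4.symm
        · exact shapeI G P Q hPne hQne hcP hcQ hndP hndQ hdisj hall hlen h4 h1.symm
end

section
/- For any positive integers n and k, there exists an (n,k)-universal set of size at most 2^k · k^{O(log k)} · log n, i.e., a family H of subsets of {1,...,n} such that for every S ⊆ {1,...,n} with |S| ≤ k, the family {S ∩ A : A ∈ H} contains all subsets of S. -/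
open SimpleGraph

universe u v

lemma aux_binom (a m : ℕ) (hm : 1 ≤ m) : a ^ m + m * a ^ (m - 1) ≤ (a + 1) ^ m := by
  induction m with
  | zero => omega
  | succ m ih =>
    rcases Nat.eq_or_lt_of_le hm with h | h
    · simp [← h]
    · have hm1 : 1 ≤ m := by omega
      have ih' := ih hm1
      have ha : a ^ m = a * a ^ (m - 1) := by
        rw [← pow_succ']; congr 1; omega
      have hsimp : m + 1 - 1 = m := by omega
      rw [hsimp]
      calc a ^ (m + 1) + (m + 1) * a ^ m
          = a * a ^ m + m * (a * a ^ (m-1)) + a ^ m := by rw [← ha]; ring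
        _ ≤ (a * a ^ m + m * (a * a ^ (m-1)) + a ^ m) + m * a ^ (m-1) :=
            Nat.le_add_right _ _
        _ = (a + 1) * (a ^ m + m * a ^ (m-1)) := by ring
        _ ≤ (a + 1) * (a + 1) ^ m := Nat.mul_le_mul_left _ ih'
        _ = (a + 1) ^ (m + 1) := by ring

lemma aux_two_pow (t : ℕ) (ht : 2 ≤ t) : 2 * (t - 1) ^ t ≤ t ^ t := by
  obtain ⟨s, rfl⟩ : ∃ s, t = s + 1 := ⟨t - 1, by omega⟩
  have hs : 1 ≤ s := by omega
  simp only [Nat.add_sub_cancel]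
  have h2 := aux_binom s (s + 1) (by omega)
  simp only [Nat.add_sub_cancel] at h2
  have h3 : s ^ (s + 1) ≤ (s + 1) * s ^ s := by
    rw [pow_succ, Nat.mul_comm]
    exact Nat.mul_le_mul_right _ (by omega)
  calc 2 * s ^ (s+1) = s ^ (s+1) + s ^ (s+1) := by ring
    _ ≤ s ^ (s+1) + (s+1) * s ^ s := by omega
    _ ≤ (s+1) ^ (s+1) := h2

lemma countGood {n : ℕ} (S S' : Finset (Fin n)) (h : S' ⊆ S) :
    (Finset.univ.filter (fun A => S ∩ A = S')).card = 2 ^ (n - S.card) := by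
  have hcard : (Finset.univ \ S : Finset (Fin n)).card = n - S.card := by
    rw [Finset.card_sdiff_of_subset (Finset.subset_univ S), Finset.card_univ, Fintype.card_fin]
  rw [← hcard, ← Finset.card_powerset]
  have h' : ∀ x, x ∈ S' → x ∈ S := fun x hx => h hx
  refine Finset.card_bij' (fun A _ => A \ S) (fun B _ => B ∪ S') ?_ ?_ ?_ ?_
  · intro A hA
    simp only [Finset.mem_powerset]
    intro x hx
    simp only [Finset.mem_sdiff, Finset.mem_univ, true_and] at hx ⊢
    exact hx.2
  · intro B hB
    simp only [Finset.mem_powerset] at hB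
    have hB' : ∀ x, x ∈ B → x ∉ S := by
      intro x hx
      have := hB hx
      simp only [Finset.mem_sdiff] at this
      exact this.2
    simp only [Finset.mem_filter, Finset.mem_univ, true_and]
    ext x
    simp only [Finset.mem_inter, Finset.mem_union]
    constructor
    · rintro ⟨hxS, hx | hx⟩
      · exact absurd hxS (hB' x hx)
      · exact hx
    · intro hx; exact ⟨h' x hx, Or.inr hx⟩
  · intro A hA
    simp only [Finset.mem_filter, Finset.mem_univ, true_and] at hA
    have hA' := Finset.ext_iff.mp hA
    simp only [Finset.mem_inter] at hA'
    ext x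
    simp only [Finset.mem_union, Finset.mem_sdiff]
    constructor
    · rintro (⟨hx, -⟩ | hx)
      · exact hx
      · exact ((hA' x).mpr hx).2
    · intro hx
      by_cases hxS : x ∈ S
      · exact Or.inr ((hA' x).mp ⟨hxS, hx⟩)
      · exact Or.inl ⟨hx, hxS⟩
  · intro B hB
    simp only [Finset.mem_powerset] at hB
    have hB' : ∀ x, x ∈ B → x ∉ S := by
      intro x hx
      have := hB hx
      simp only [Finset.mem_sdiff] at this
      exact this.2
    ext x
    simp only [Finset.mem_sdiff, Finset.mem_union]
    constructor
    · rintro ⟨hx | hx, hxS⟩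
      · exact hx
      · exact absurd (h' x hx) hxS
    · intro hx
      exact ⟨Or.inl hx, hB' x hx⟩

variable {n k : ℕ}

def Sg (g : Fin k → Option (Fin n) × Bool) : Finset (Fin n) :=
  Finset.univ.filter (fun x => ∃ j, (g j).1 = some x)

def Sg' (g : Fin k → Option (Fin n) × Bool) : Finset (Fin n) :=
  Finset.univ.filter (fun x => ∃ j, g j = (some x, true))

lemma Sg'_subset (g : Fin k → Option (Fin n) × Bool) : Sg' g ⊆ Sg g := by
  intro x hx
  simp only [Sg', Finset.mem_filter, Finset.mem_univ, true_and] at hx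
  obtain ⟨j, hj⟩ := hx
  simp only [Sg, Finset.mem_filter, Finset.mem_univ, true_and]
  exact ⟨j, by rw [hj]⟩

lemma Sg_card (g : Fin k → Option (Fin n) × Bool) : (Sg g).card ≤ k := by
  have h1 : (Sg g).card ≤ ((Finset.univ : Finset (Fin k)).image (fun j => (g j).1)).card := by
    apply Finset.card_le_card_of_injOn (fun x => some x)
    · intro x hx
      simp only [Finset.mem_coe, Sg, Finset.mem_filter, Finset.mem_univ, true_and] at hx
      obtain ⟨j, hj⟩ := hx
      exact Finset.mem_image.mpr ⟨j, Finset.mem_univ j, hj⟩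
    · intro a _ b _ hab
      exact Option.some_injective _ hab
  calc (Sg g).card ≤ _ := h1
    _ ≤ (Finset.univ : Finset (Fin k)).card := Finset.card_image_le
    _ = k := by simp

lemma Sg_surj (S S' : Finset (Fin n)) (hS : S.card ≤ k) (hsub : S' ⊆ S) :
    ∃ g : Fin k → Option (Fin n) × Bool, Sg g = S ∧ Sg' g = S' := by
  set l := S.toList with hl
  have hlen : l.length = S.card := Finset.length_toList S
  have hmem : ∀ x, x ∈ l ↔ x ∈ S := fun x => Finset.mem_toList
  refine ⟨fun j => if hj : (j : ℕ) < l.length then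
      (some (l.get ⟨j, hj⟩), decide (l.get ⟨j, hj⟩ ∈ S')) else (none, false), ?_, ?_⟩
  · ext x
    simp only [Sg, Finset.mem_filter, Finset.mem_univ, true_and]
    constructor
    · rintro ⟨j, hj⟩
      split_ifs at hj with h
      · simp only [Option.some.injEq] at hj
        rw [← hj]
        exact (hmem _).mp (l.get_mem _)
    · intro hx
      obtain ⟨i, hi⟩ := List.mem_iff_get.mp ((hmem x).mpr hx)
      have hik : (i : ℕ) < k := by have h1 := i.isLt; omega
      refine ⟨⟨i, hik⟩, ?_⟩
      have hil : ((⟨(i : ℕ), hik⟩ : Fin k) : ℕ) < l.length := i.isLt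
      rw [dif_pos hil]
      simp only [Option.some.injEq]
      rw [← hi]
  · ext x
    simp only [Sg', Finset.mem_filter, Finset.mem_univ, true_and]
    constructor
    · rintro ⟨j, hj⟩
      split_ifs at hj with h
      · rw [Prod.mk.injEq] at hj
        obtain ⟨h1, h2⟩ := hj
        simp only [Option.some.injEq] at h1
        rw [← h1]
        exact of_decide_eq_true h2
      · simp at hj
    · intro hx
      obtain ⟨i, hi⟩ := List.mem_iff_get.mp ((hmem x).mpr (hsub hx))
      have hik : (i : ℕ) < k := by have h1 := i.isLt; omega
      refine ⟨⟨i, hik⟩, ?_⟩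
      have hil : ((⟨(i : ℕ), hik⟩ : Fin k) : ℕ) < l.length := i.isLt
      rw [dif_pos hil]
      have hget : l.get ⟨((⟨(i : ℕ), hik⟩ : Fin k) : ℕ), hil⟩ = x := by
        rw [← hi]
      rw [hget, Prod.mk.injEq]
      exact ⟨rfl, decide_eq_true hx⟩
lemma arith (n k : ℕ) (hk2 : 2 ≤ k) (hkn : k < n) :
    ((n+1)*2) ^ k * (2^n - 2^(n-k)) ^ (2^k * (k * (Nat.log 2 n + 2) + 1)) <
      (2^n) ^ (2^k * (k * (Nat.log 2 n + 2) + 1)) := by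
  set L := Nat.log 2 n with hL
  set r := k * (L + 2) + 1 with hr
  set t := 2^k with ht
  set m := t * r with hm
  have ht4 : 4 ≤ t := by
    calc (4:ℕ) = 2^2 := rfl
      _ ≤ 2^k := Nat.pow_le_pow_right (by norm_num) hk2
  have hsplit : 2^n = 2^(n-k) * t := by rw [ht, ← pow_add]; congr 1; omega
  have hdiff : 2^n - 2^(n-k) = 2^(n-k) * (t - 1) := by
    rw [hsplit]
    rw [Nat.mul_sub, Nat.mul_one]
  have hkey : ((n+1)*2)^k * (t-1)^m < t^m := by
    have hn1 : (n+1)*2 ≤ 2^(L+2) := by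
      have h1 : n < 2^(L+1) := Nat.lt_pow_succ_log_self (by norm_num) n
      calc (n+1)*2 ≤ 2^(L+1)*2 := by omega
        _ = 2^(L+2) := by ring
    have h5 : ((n+1)*2)^k ≤ 2^(k*(L+2)) := by
      rw [Nat.mul_comm k, pow_mul]
      exact Nat.pow_le_pow_left hn1 k
    have hpos : 0 < (t-1)^m := pow_pos (by omega) m
    have h6 : 2^r * (t-1)^m ≤ t^m := by
      have h7 : (2 * (t-1)^t)^r ≤ (t^t)^r :=
        Nat.pow_le_pow_left (aux_two_pow t (by omega)) r
      calc 2^r * (t-1)^m = (2 * (t-1)^t)^r := by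
            rw [mul_pow, hm, pow_mul]
        _ ≤ (t^t)^r := h7
        _ = t^m := by rw [hm, pow_mul]
    calc ((n+1)*2)^k * (t-1)^m ≤ 2^(k*(L+2)) * (t-1)^m :=
          Nat.mul_le_mul_right _ h5
      _ < 2^r * (t-1)^m := by
          exact (Nat.mul_lt_mul_right hpos).mpr
            (Nat.pow_lt_pow_right (by norm_num) (by omega))
      _ ≤ t^m := h6
  calc ((n+1)*2)^k * (2^n - 2^(n-k))^m
      = ((n+1)*2)^k * ((2^(n-k))^m * (t-1)^m) := by rw [hdiff]; ring
    _ = (2^(n-k))^m * (((n+1)*2)^k * (t-1)^m) := by ring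
    _ < (2^(n-k))^m * t^m :=
        (Nat.mul_lt_mul_left (pow_pos (by norm_num) m)).mpr hkey
    _ = (2^n)^m := by rw [hsplit, mul_pow]
lemma main_case (n k : ℕ) (hk2 : 2 ≤ k) (hkn : k < n) :
    ∃ H : Finset (Finset (Fin n)),
      (∀ S : Finset (Fin n), S.card ≤ k → ∀ S' ⊆ S, ∃ A ∈ H, S ∩ A = S') ∧
      H.card ≤ 2 ^ k * (k * (Nat.log 2 n + 2) + 1) := by
  classical
  set m := 2 ^ k * (k * (Nat.log 2 n + 2) + 1) with hm
  have hex : ∃ f : Fin m → Finset (Fin n),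
      ∀ S : Finset (Fin n), S.card ≤ k → ∀ S' ⊆ S, ∃ i, S ∩ f i = S' := by
    by_contra hcon
    push_neg at hcon
    set Bad : (Fin k → Option (Fin n) × Bool) → Finset (Fin m → Finset (Fin n)) :=
      fun g => Fintype.piFinset
        (fun _ => Finset.univ.filter (fun A => ¬ (Sg g ∩ A = Sg' g))) with hBad
    have hcover : (Finset.univ : Finset (Fin m → Finset (Fin n))) ⊆
        Finset.univ.biUnion Bad := by
      intro f _
      obtain ⟨S, hS, S', hsub, hbad⟩ := hcon f
      obtain ⟨g, hg1, hg2⟩ := Sg_surj S S' hS hsub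
      refine Finset.mem_biUnion.mpr ⟨g, Finset.mem_univ g, ?_⟩
      refine Fintype.mem_piFinset.mpr ?_
      intro i
      simp only [Finset.mem_filter, Finset.mem_univ, true_and]
      rw [hg1, hg2]
      exact hbad i
    have hcard1 : ((Finset.univ : Finset (Fin m → Finset (Fin n)))).card = (2^n)^m := by
      rw [Finset.card_univ, Fintype.card_fun]
      simp [Fintype.card_finset]
    have hBadcard : ∀ g, (Bad g).card ≤ (2^n - 2^(n-k))^m := by
      intro g
      have h1 : (Bad g).card =
          (Finset.univ.filter (fun A : Finset (Fin n) => ¬ (Sg g ∩ A = Sg' g))).card ^ m := by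
        rw [hBad]
        rw [Fintype.card_piFinset]
        simp
      have hsum := Finset.card_filter_add_card_filter_not
        (s := (Finset.univ : Finset (Finset (Fin n))))
        (p := fun A => Sg g ∩ A = Sg' g)
      have hgood := countGood (Sg g) (Sg' g) (Sg'_subset g)
      have huniv : (Finset.univ : Finset (Finset (Fin n))).card = 2^n := by
        simp [Fintype.card_finset]
      have h2 : (Finset.univ.filter (fun A : Finset (Fin n) => ¬ (Sg g ∩ A = Sg' g))).card
          = 2^n - 2^(n - (Sg g).card) := by omega
      have h3 : 2^(n-k) ≤ 2^(n - (Sg g).card) :=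
        Nat.pow_le_pow_right (by norm_num) (by have := Sg_card g; omega)
      rw [h1, h2]
      exact Nat.pow_le_pow_left (by omega) m
    have htotal : (2^n)^m ≤ ((n+1)*2)^k * (2^n - 2^(n-k))^m := by
      calc (2^n)^m = ((Finset.univ : Finset (Fin m → Finset (Fin n)))).card := hcard1.symm
        _ ≤ (Finset.univ.biUnion Bad).card := Finset.card_le_card hcover
        _ ≤ ∑ g, (Bad g).card := Finset.card_biUnion_le
        _ ≤ ∑ _g : (Fin k → Option (Fin n) × Bool), (2^n - 2^(n-k))^m :=
            Finset.sum_le_sum (fun g _ => hBadcard g)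
        _ = (Fintype.card (Fin k → Option (Fin n) × Bool)) * (2^n - 2^(n-k))^m := by
            rw [Finset.sum_const, Finset.card_univ, smul_eq_mul]
        _ = ((n+1)*2)^k * (2^n - 2^(n-k))^m := by
            rw [Fintype.card_fun]
            simp [Fintype.card_prod, Fintype.card_option]
    exact absurd htotal (not_le.mpr (arith n k hk2 hkn))
  obtain ⟨f, hf⟩ := hex
  refine ⟨Finset.image f Finset.univ, ?_, ?_⟩
  · intro S hS S' hsub
    obtain ⟨i, hi⟩ := hf S hS S' hsub
    exact ⟨f i, Finset.mem_image.mpr ⟨i, Finset.mem_univ i, rfl⟩, hi⟩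
  · calc (Finset.image f Finset.univ).card ≤ (Finset.univ : Finset (Fin m)).card :=
        Finset.card_image_le
      _ = m := by simp


/-- For all positive `n, k` there is an `(n,k)`-universal set of size at most
`2^k · k^{O(log k)} · log n`. -/
theorem stmt17 : ∃ C : ℕ, ∀ n k : ℕ, 0 < n → 0 < k →
    ∃ H : Finset (Finset (Fin n)),
      (∀ S : Finset (Fin n), S.card ≤ k → ∀ S' ⊆ S, ∃ A ∈ H, S ∩ A = S') ∧
      H.card ≤ 2 ^ k * k ^ (C * (Nat.log 2 k + 1)) * (Nat.log 2 n + 1) := by 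
  classical
  refine ⟨2, ?_⟩
  intro n k hn hk
  by_cases hkn : n ≤ k
  · refine ⟨(Finset.univ : Finset (Fin n)).powerset, ?_, ?_⟩
    · intro S _ S' hsub
      exact ⟨S', Finset.mem_powerset.mpr (Finset.subset_univ S'),
        Finset.inter_eq_right.mpr hsub⟩
    · rw [Finset.card_powerset, Finset.card_univ, Fintype.card_fin]
      calc 2^n ≤ 2^k := Nat.pow_le_pow_right (by norm_num) hkn
        _ ≤ 2^k * (k ^ (2*(Nat.log 2 k + 1)) * (Nat.log 2 n + 1)) :=
            Nat.le_mul_of_pos_right _ (by positivity)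
        _ = 2 ^ k * k ^ (2 * (Nat.log 2 k + 1)) * (Nat.log 2 n + 1) := by ring
  · push_neg at hkn
    by_cases hk1 : k = 1
    · subst hk1
      refine ⟨{∅, Finset.univ}, ?_, ?_⟩
      · intro S hS S' hsub
        by_cases h' : S' = ∅
        · exact ⟨∅, by simp, by simp [h']⟩
        · have hSS : S' = S := by
            have h1 : 1 ≤ S'.card := by
              rcases Finset.nonempty_of_ne_empty h' with ⟨x, hx⟩
              exact Finset.card_pos.mpr ⟨x, hx⟩
            exact Finset.eq_of_subset_of_card_le hsub (by omega)
          exact ⟨Finset.univ, by simp, by simp [hSS]⟩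
      · have h2 : ({∅, Finset.univ} : Finset (Finset (Fin n))).card ≤ 2 :=
          Finset.card_insert_le _ _ |>.trans (by simp)
        have h3 : (2:ℕ) ≤ 2 ^ 1 * 1 ^ (2 * (Nat.log 2 1 + 1)) * (Nat.log 2 n + 1) := by
          simp
        omega
    · have hk2 : 2 ≤ k := by omega
      obtain ⟨H, hH, hcard⟩ := main_case n k hk2 hkn
      refine ⟨H, hH, ?_⟩
      have hlog : 1 ≤ Nat.log 2 k := by
        have := (Nat.le_log_iff_pow_le (by norm_num) (by omega)).mpr
          (show 2^1 ≤ k by omega)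
        omega
      set L := Nat.log 2 n with hL
      have e1 : k*(L+2)+1 ≤ 3*k*(L+1) := by nlinarith
      have e2 : 3*k ≤ k^4 := by
        have h8 : 2^3 ≤ k^3 := Nat.pow_le_pow_left hk2 3
        calc 3*k ≤ 8*k := by omega
          _ ≤ k^3 * k := Nat.mul_le_mul_right k (by norm_num at h8 ⊢; omega)
          _ = k^4 := by ring
      have e3 : k^4 ≤ k^(2*(Nat.log 2 k + 1)) :=
        Nat.pow_le_pow_right (by omega) (by omega)
      calc H.card ≤ 2^k * (k*(L+2)+1) := hcard
        _ ≤ 2^k * (3*k*(L+1)) := Nat.mul_le_mul_left _ e1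
        _ ≤ 2^k * (k^4*(L+1)) := Nat.mul_le_mul_left _ (Nat.mul_le_mul_right _ e2)
        _ ≤ 2^k * (k^(2*(Nat.log 2 k + 1))*(L+1)) :=
            Nat.mul_le_mul_left _ (Nat.mul_le_mul_right _ e3)
        _ = 2 ^ k * k ^ (2 * (Nat.log 2 k + 1)) * (L + 1) := by ring
end
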